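/- arXiv:0907.3386 — 3 statements merged into one kernel-verified Lean document; each statement's English description precedes it below -/
import Mathlib

section
/- Let {ρ_k}_{k∈K} be a finite ensemble of positive semidefinite operators on a finite-dimensional Hilbert space H with Σ_k Tr ρ_k = 1. Then the optimal success probability P_opt = max over POVMs {M_k} of Σ_k Tr(M_k ρ_k) satisfies P_opt ≤ Λ, where Λ = Tr√(Σ_k ρ_k²). -/
open Matrix ComplexOrder

/-- The positive semidefinite square root of a positive semidefinite matrix
(the definition of `Matrix.PosSemidef.sqrt` in the older Mathlib, since removed). -/
noncomputable def Matrix.PosSemidef.sqrt {n 𝕜 : Type*} [Fintype n] [RCLike 𝕜] [DecidableEq n]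
    {A : Matrix n n 𝕜} (hA : A.PosSemidef) : Matrix n n 𝕜 :=
  hA.1.eigenvectorUnitary.1 * diagonal ((↑) ∘ (√·) ∘ hA.1.eigenvalues) *
  (star hA.1.eigenvectorUnitary : Matrix n n 𝕜)


section helpers
variable {n : Type*} [Fintype n] [DecidableEq n]

lemma hc_trace_cts_re (A : Matrix n n ℂ) :
    ((Aᴴ * A).trace).re = ∑ i, ∑ j, Complex.normSq (A j i) := by
  simp only [Matrix.trace, Matrix.diag, Matrix.mul_apply, Matrix.conjTranspose_apply]
  rw [Complex.re_sum]
  congr 1; ext i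
  rw [Complex.re_sum]
  congr 1; ext j
  simp [Complex.normSq_apply, Complex.mul_re]

lemma hc_trace_re_nonneg {A : Matrix n n ℂ} (hA : A.PosSemidef) : 0 ≤ A.trace.re := by
  obtain ⟨B, rfl⟩ : ∃ B : Matrix n n ℂ, A = Bᴴ * B := by
    open scoped MatrixOrder in exact CStarAlgebra.nonneg_iff_eq_star_mul_self.mp hA.nonneg
  rw [hc_trace_cts_re]
  exact Finset.sum_nonneg fun i _ => Finset.sum_nonneg fun j _ => Complex.normSq_nonneg _

lemma hc_eq_zero_of_trace (A : Matrix n n ℂ) (h : ((Aᴴ * A).trace).re = 0) : A = 0 := by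
  rw [hc_trace_cts_re] at h
  ext j i
  have := (Finset.sum_eq_zero_iff_of_nonneg (fun i _ => Finset.sum_nonneg
    (fun j _ => Complex.normSq_nonneg _))).mp h i (Finset.mem_univ i)
  have := (Finset.sum_eq_zero_iff_of_nonneg (fun j _ => Complex.normSq_nonneg _)).mp this
    j (Finset.mem_univ j)
  simpa using Complex.normSq_eq_zero.mp this

lemma hc_trace_mul_re_nonneg {A B : Matrix n n ℂ} (hA : A.PosSemidef) (hB : B.PosSemidef) :
    0 ≤ (A * B).trace.re := by
  obtain ⟨C, rfl⟩ : ∃ C : Matrix n n ℂ, B = Cᴴ * C := by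
    open scoped MatrixOrder in exact CStarAlgebra.nonneg_iff_eq_star_mul_self.mp hB.nonneg
  rw [← Matrix.mul_assoc, Matrix.trace_mul_comm, ← Matrix.mul_assoc]
  exact hc_trace_re_nonneg (hA.mul_mul_conjTranspose_same C)

end helpers

section cfc
variable {n : Type*} [Fintype n] [DecidableEq n] {A : Matrix n n ℂ} (hA : A.IsHermitian)

lemma hc_cfc_mul (f g : ℝ → ℝ) :
    hA.cfc f * hA.cfc g = hA.cfc (fun x => f x * g x) := by
  have key : ∀ {a b c d e f : Matrix n n ℂ}, (a * b * c) * (d * e * f) = a * (b * (c * d) * e) * f := by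
    intros; simp only [Matrix.mul_assoc]
  unfold Matrix.IsHermitian.cfc
  simp only [Unitary.conjStarAlgAut_apply]
  rw [key, Unitary.star_mul_self_of_mem (SetLike.coe_mem _), Matrix.mul_one,
    Matrix.diagonal_mul_diagonal]
  rw [show (fun i => (RCLike.ofReal ∘ f ∘ hA.eigenvalues) i * (RCLike.ofReal ∘ g ∘ hA.eigenvalues) i)
    = (RCLike.ofReal ∘ (fun x => f x * g x) ∘ hA.eigenvalues : n → ℂ) from funext fun i => by simp]

lemma hc_cfc_congr {f g : ℝ → ℝ} (h : ∀ i, f (hA.eigenvalues i) = g (hA.eigenvalues i)) :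
    hA.cfc f = hA.cfc g := by
  unfold Matrix.IsHermitian.cfc
  simp only [Unitary.conjStarAlgAut_apply]
  rw [show (RCLike.ofReal ∘ f ∘ hA.eigenvalues : n → ℂ) = (RCLike.ofReal ∘ g ∘ hA.eigenvalues : n → ℂ)
    from funext fun i => by simp [h i]]

lemma hc_cfc_one : hA.cfc (fun _ => 1) = 1 := by
  unfold Matrix.IsHermitian.cfc
  simp only [Unitary.conjStarAlgAut_apply]
  have : Matrix.diagonal (RCLike.ofReal ∘ (fun _ : ℝ => (1:ℝ)) ∘ hA.eigenvalues) =
      (1 : Matrix n n ℂ) := by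
    rw [← Matrix.diagonal_one]
    exact congrArg _ (funext fun i => by simp)
  rw [this, Matrix.mul_one, Unitary.mul_star_self_of_mem (SetLike.coe_mem _)]

lemma hc_cfc_add (f g : ℝ → ℝ) :
    hA.cfc f + hA.cfc g = hA.cfc (fun x => f x + g x) := by
  unfold Matrix.IsHermitian.cfc
  simp only [Unitary.conjStarAlgAut_apply]
  rw [← Matrix.add_mul, ← Matrix.mul_add, Matrix.diagonal_add]
  rw [show (fun i => (RCLike.ofReal ∘ f ∘ hA.eigenvalues) i + (RCLike.ofReal ∘ g ∘ hA.eigenvalues) i)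
    = (RCLike.ofReal ∘ (fun x => f x + g x) ∘ hA.eigenvalues : n → ℂ) from funext fun i => by simp]

lemma hc_cfc_herm (f : ℝ → ℝ) : (hA.cfc f).IsHermitian := by
  unfold Matrix.IsHermitian.cfc
  simp only [Unitary.conjStarAlgAut_apply]
  unfold Matrix.IsHermitian
  rw [Matrix.conjTranspose_mul, Matrix.conjTranspose_mul, ← Matrix.star_eq_conjTranspose,
    ← Matrix.star_eq_conjTranspose, star_star, Matrix.star_eq_conjTranspose (Matrix.diagonal _),
    Matrix.diagonal_conjTranspose, Matrix.mul_assoc]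
  rw [show (star (RCLike.ofReal ∘ f ∘ hA.eigenvalues) : n → ℂ) = (RCLike.ofReal ∘ f ∘ hA.eigenvalues : n → ℂ)
    from funext fun i => by simp [Pi.star_def]]
  rfl

lemma hc_cfc_psd {f : ℝ → ℝ} (hf : ∀ x, 0 ≤ f x) : (hA.cfc f).PosSemidef := by
  unfold Matrix.IsHermitian.cfc
  simp only [Unitary.conjStarAlgAut_apply]
  rw [Matrix.star_eq_conjTranspose]
  exact Matrix.PosSemidef.mul_mul_conjTranspose_same
    (Matrix.PosSemidef.diagonal fun i => by
      simpa using Complex.zero_le_real.mpr (hf _)) _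

lemma hc_sqrt_eq_cfc {A : Matrix n n ℂ} (hA : A.PosSemidef) : hA.sqrt = hA.1.cfc Real.sqrt := rfl

end cfc


section cfc2
variable {n : Type*} [Fintype n] [DecidableEq n] {A : Matrix n n ℂ} (hA : A.IsHermitian)

lemma hc_cfc_id : hA.cfc (fun x => x) = A := by
  conv_rhs => rw [hA.spectral_theorem]
  rfl

lemma hc_cfc_zero : hA.cfc (fun _ => 0) = 0 := by
  unfold Matrix.IsHermitian.cfc
  simp only [Unitary.conjStarAlgAut_apply]
  have : Matrix.diagonal (RCLike.ofReal ∘ (fun _ : ℝ => (0:ℝ)) ∘ hA.eigenvalues) =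
      (0 : Matrix n n ℂ) := by
    rw [← Matrix.diagonal_zero]
    exact congrArg _ (funext fun i => by simp)
  rw [this, Matrix.mul_zero, Matrix.zero_mul]

lemma hc_trace_ct_mul (A B : Matrix n n ℂ) :
    (Aᴴ * B).trace = ∑ i, ∑ j, (starRingEnd ℂ) (A j i) * B j i := by
  simp [Matrix.trace, Matrix.diag, Matrix.mul_apply, Matrix.conjTranspose_apply]

lemma Matrix.PosSemidef.posSemidef_sqrt {A : Matrix n n ℂ} (hA : A.PosSemidef) :
    hA.sqrt.PosSemidef := by
  rw [hc_sqrt_eq_cfc]; exact hc_cfc_psd hA.1 (fun x => Real.sqrt_nonneg _)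

lemma Matrix.PosSemidef.sqrt_mul_self {A : Matrix n n ℂ} (hA : A.PosSemidef) :
    hA.sqrt * hA.sqrt = A := by
  rw [hc_sqrt_eq_cfc, hc_cfc_mul]
  conv_rhs => rw [← hc_cfc_id hA.1]
  exact hc_cfc_congr hA.1 fun i => Real.mul_self_sqrt (hA.eigenvalues_nonneg i)

end cfc2

/-- Upper generalized Holevo–Curlander bound: for an ensemble `{ρ_k}` of positive
semidefinite operators with `Σ Tr ρ_k = 1` on a finite-dimensional Hilbert space,
every POVM `{M_k}` has success probability at most `Λ = Tr √(Σ ρ_k²)`; hence so does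
the optimal measurement. -/
theorem povm_success_le_holevo_curlander
    {n K : Type*} [Fintype n] [DecidableEq n] [Fintype K]
    (ρ : K → Matrix n n ℂ) (hρ : ∀ k, (ρ k).PosSemidef)
    (hnorm : (∑ k, (ρ k).trace) = 1)
    (M : K → Matrix n n ℂ) (hM : ∀ k, (M k).PosSemidef)
    (hMsum : ((1 : Matrix n n ℂ) - ∑ k, M k).PosSemidef) :
    (∑ k, ((M k) * (ρ k)).trace).re ≤
      (Matrix.PosSemidef.sqrt
        (show (∑ k, (ρ k) ^ 2).PosSemidef from
          Finset.sum_induction _ Matrix.PosSemidef (fun a b ha hb => ha.add hb)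
            Matrix.PosSemidef.zero (fun k _ => (hρ k).pow 2))).trace.re := by
  classical
  have hS : (∑ k, (ρ k) ^ 2).PosSemidef :=
    Finset.sum_induction _ Matrix.PosSemidef (fun a b ha hb => ha.add hb)
      Matrix.PosSemidef.zero (fun k _ => (hρ k).pow 2)
  show (∑ k, ((M k) * (ρ k)).trace).re ≤ hS.sqrt.trace.re
  set S : Matrix n n ℂ := ∑ k, (ρ k) ^ 2 with hSdef
  have h : S.IsHermitian := hS.1
  have hev : ∀ i, 0 ≤ h.eigenvalues i := hS.eigenvalues_nonneg
  -- functions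
  set f4 : ℝ → ℝ := fun x => Real.sqrt (Real.sqrt x) with hf4
  set g : ℝ → ℝ := fun x => if x = 0 then 0 else (Real.sqrt (Real.sqrt x))⁻¹ with hg
  set Q : Matrix n n ℂ := h.cfc f4 with hQdef
  set N : Matrix n n ℂ := h.cfc g with hNdef
  set E : Matrix n n ℂ := h.cfc (fun x => if x = 0 then 1 else 0) with hEdef
  have hQ : Q.PosSemidef := hc_cfc_psd h (fun x => Real.sqrt_nonneg _)
  have hN : N.PosSemidef := hc_cfc_psd h (fun x => by
    by_cases hx : x = 0 <;> simp [hg, hx, inv_nonneg, Real.sqrt_nonneg])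
  have hEherm : E.IsHermitian := hc_cfc_herm h _
  -- Q * Q = sqrt S
  have hsqrtS : hS.sqrt = h.cfc Real.sqrt := rfl
  have hid : h.cfc (fun x => x) = S := hc_cfc_id h
  have hQQ : Q * Q = hS.sqrt := by
    have e1 : Q * Q = h.cfc (fun x => f4 x * f4 x) := hc_cfc_mul h f4 f4
    have e2 : h.cfc (fun x => f4 x * f4 x) = h.cfc Real.sqrt :=
      hc_cfc_congr h (fun i => Real.mul_self_sqrt (Real.sqrt_nonneg _))
    rw [e1, e2, hsqrtS]
  -- f4 positive away from 0
  have hf4pos : ∀ x : ℝ, 0 ≤ x → x ≠ 0 → 0 < f4 x := fun x hx hx0 =>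
    Real.sqrt_pos.mpr (Real.sqrt_pos.mpr (lt_of_le_of_ne hx (Ne.symm hx0)))
  -- Q * N = 1 - E  and  N * Q = 1 - E
  have hQN : Q * N = 1 - E := by
    rw [eq_sub_iff_add_eq, hQdef, hNdef, hEdef, hc_cfc_mul, hc_cfc_add, ← hc_cfc_one h]
    refine hc_cfc_congr h fun i => ?_
    by_cases hx : h.eigenvalues i = 0
    · simp [hg, hx]
    · have := (hf4pos _ (hev i) hx).ne'
      simp [hg, hx]; exact mul_inv_cancel₀ this
  have hNQ : N * Q = 1 - E := by
    rw [eq_sub_iff_add_eq, hQdef, hNdef, hEdef, hc_cfc_mul, hc_cfc_add, ← hc_cfc_one h]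
    refine hc_cfc_congr h fun i => ?_
    by_cases hx : h.eigenvalues i = 0
    · simp [hg, hx]
    · have := (hf4pos _ (hev i) hx).ne'
      simp [hg, hx]; exact inv_mul_cancel₀ this
  -- N * N * S = sqrt S
  have hNNS : N * N * S = hS.sqrt := by
    have e1 : N * N = h.cfc (fun x => g x * g x) := hc_cfc_mul h g g
    have e2 : h.cfc (fun x => g x * g x) * h.cfc (fun x => x) =
        h.cfc (fun x => (g x * g x) * x) := hc_cfc_mul h _ _
    calc N * N * S = h.cfc (fun x => g x * g x) * h.cfc (fun x => x) := by
          rw [e1]; exact congrArg _ hid.symm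
      _ = h.cfc (fun x => (g x * g x) * x) := e2
      _ = hS.sqrt := by
          rw [hsqrtS]
          refine hc_cfc_congr h fun i => ?_
          by_cases hx : h.eigenvalues i = 0
          · simp [hg, hx]
          · have hx' : (0:ℝ) < h.eigenvalues i := lt_of_le_of_ne (hev i) (Ne.symm hx)
            simp only [hg, if_neg hx]
            rw [← mul_inv, Real.mul_self_sqrt (Real.sqrt_nonneg _),
              inv_mul_eq_iff_eq_mul₀ (Real.sqrt_pos.mpr hx').ne']
            exact (Real.mul_self_sqrt (hev i)).symm
  -- E * S = 0
  have hES : E * S = 0 := by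
    have e2 : h.cfc (fun x => if x = 0 then 1 else 0) * h.cfc (fun x => x) =
        h.cfc (fun x => (if x = 0 then (1:ℝ) else 0) * x) := hc_cfc_mul h _ _
    calc E * S = h.cfc (fun x => if x = 0 then 1 else 0) * h.cfc (fun x => x) := by
          rw [hEdef]; exact congrArg _ hid.symm
      _ = h.cfc (fun x => (if x = 0 then (1:ℝ) else 0) * x) := e2
      _ = h.cfc (fun _ => 0) :=
          hc_cfc_congr h fun i => by by_cases hx : h.eigenvalues i = 0 <;> simp [hx]
      _ = 0 := hc_cfc_zero h
  -- E * ρ k = 0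
  have hEρ : ∀ k, E * ρ k = 0 := by
    intro k
    have hsum : ∑ j, E * ρ j ^ 2 * E = 0 := by
      rw [← Finset.sum_mul, ← Finset.mul_sum, ← hSdef, hES, Matrix.zero_mul]
    have hterm : ∀ j, E * ρ j ^ 2 * E = (ρ j * E)ᴴ * (ρ j * E) := by
      intro j
      rw [Matrix.conjTranspose_mul, hEherm.eq, (hρ j).1.eq, pow_two]
      noncomm_ring
    have htr : ∑ j, ((ρ j * E)ᴴ * (ρ j * E)).trace.re = 0 := by
      have := congrArg Matrix.trace hsum
      rw [Matrix.trace_sum] at this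
      simp_rw [hterm] at this
      rw [show (0 : Matrix n n ℂ).trace = 0 from Matrix.trace_zero _ _] at this
      calc ∑ j, ((ρ j * E)ᴴ * (ρ j * E)).trace.re
          = (∑ j, ((ρ j * E)ᴴ * (ρ j * E)).trace).re := (Complex.re_sum _ _).symm
        _ = 0 := by rw [this]; simp
    have hzero : ρ k * E = 0 := by
      refine hc_eq_zero_of_trace _ ?_
      have hnn : ∀ j ∈ Finset.univ, 0 ≤ ((ρ j * E)ᴴ * (ρ j * E)).trace.re := fun j _ => by
        rw [hc_trace_cts_re]
        exact Finset.sum_nonneg fun _ _ => Finset.sum_nonneg fun _ _ => Complex.normSq_nonneg _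
      exact (Finset.sum_eq_zero_iff_of_nonneg hnn).mp htr k (Finset.mem_univ k)
    have : (ρ k * E)ᴴ = E * ρ k := by
      rw [Matrix.conjTranspose_mul, hEherm.eq, (hρ k).1.eq]
    rw [← this, hzero, Matrix.conjTranspose_zero]
  -- (1 - E) * ρ k = ρ k
  have hPρ : ∀ k, (1 - E) * ρ k = ρ k := fun k => by
    rw [Matrix.sub_mul, Matrix.one_mul, hEρ k, sub_zero]
  -- measurement square roots
  set R : K → Matrix n n ℂ := fun k => (hM k).sqrt with hRdef
  have hRpsd : ∀ k, (R k).PosSemidef := fun k => (hM k).posSemidef_sqrt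
  have hRR : ∀ k, R k * R k = M k := fun k => (hM k).sqrt_mul_self
  -- the two families
  set A : K → Matrix n n ℂ := fun k => Q * R k with hAdef
  set B : K → Matrix n n ℂ := fun k => N * ρ k * R k with hBdef
  -- 1 - M k is psd
  have hMk1 : ∀ k, ((1 : Matrix n n ℂ) - M k).PosSemidef := by
    intro k
    have hrest : (∑ j ∈ Finset.univ.erase k, M j).PosSemidef :=
      Finset.sum_induction _ Matrix.PosSemidef (fun a b ha hb => ha.add hb)
        Matrix.PosSemidef.zero (fun j _ => hM j)
    have : (1 : Matrix n n ℂ) - M k = (1 - ∑ j, M j) + ∑ j ∈ Finset.univ.erase k, M j := by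
      rw [Finset.sum_erase_eq_sub (Finset.mem_univ k)]
      abel
    rw [this]
    exact hMsum.add hrest
  -- trace identities
  have hAB : ∀ k, ((A k)ᴴ * B k).trace = (M k * ρ k).trace := by
    intro k
    have : (A k)ᴴ * B k = R k * (ρ k * R k) := by
      rw [hAdef, hBdef]
      rw [Matrix.conjTranspose_mul, hQ.1.eq, (hRpsd k).1.eq]
      calc R k * Q * (N * ρ k * R k) = R k * ((Q * N) * ρ k) * R k := by noncomm_ring
        _ = R k * (ρ k * R k) := by rw [hQN, hPρ k, Matrix.mul_assoc]
    rw [this, ← Matrix.mul_assoc, Matrix.trace_mul_cycle, hRR k]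
  have hAA : ∀ k, ((A k)ᴴ * A k).trace = (hS.sqrt * M k).trace := by
    intro k
    have : (A k)ᴴ * A k = R k * hS.sqrt * R k := by
      rw [hAdef, Matrix.conjTranspose_mul, hQ.1.eq, (hRpsd k).1.eq, ← hQQ]
      noncomm_ring
    rw [this, Matrix.trace_mul_cycle, hRR k, Matrix.trace_mul_comm]
  have hBB : ∀ k, ((B k)ᴴ * B k).trace = ((ρ k * (N * N) * ρ k) * M k).trace := by
    intro k
    have : (B k)ᴴ * B k = R k * (ρ k * (N * N) * ρ k) * R k := by
      rw [hBdef, Matrix.conjTranspose_mul, Matrix.conjTranspose_mul, hN.1.eq, (hρ k).1.eq,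
        (hRpsd k).1.eq]
      noncomm_ring
    rw [this, Matrix.trace_mul_cycle, hRR k, Matrix.trace_mul_comm]
  -- Λ and the bounds
  set Λ : ℝ := hS.sqrt.trace.re with hΛdef
  have hΛ0 : 0 ≤ Λ := hc_trace_re_nonneg hS.posSemidef_sqrt
  have ha_le : (∑ k, ((A k)ᴴ * A k).trace).re ≤ Λ := by
    have : (∑ k, ((A k)ᴴ * A k).trace) = (hS.sqrt * ∑ k, M k).trace := by
      rw [Matrix.mul_sum, Matrix.trace_sum]
      exact Finset.sum_congr rfl fun k _ => hAA k
    rw [this]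
    have hd := hc_trace_mul_re_nonneg hS.posSemidef_sqrt hMsum
    rw [Matrix.mul_sub, Matrix.mul_one, Matrix.trace_sub, Complex.sub_re] at hd
    linarith
  have hb_le : (∑ k, ((B k)ᴴ * B k).trace).re ≤ Λ := by
    have hWpsd : (N * N).PosSemidef := by
      rw [← pow_two]; exact hN.pow 2
    have hXpsd : ∀ k, (ρ k * (N * N) * ρ k).PosSemidef := fun k => by
      have := hWpsd.mul_mul_conjTranspose_same (ρ k)
      rwa [(hρ k).1.eq] at this
    have step1 : ∀ k, ((ρ k * (N * N) * ρ k) * M k).trace.re ≤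
        ((ρ k * (N * N) * ρ k)).trace.re := by
      intro k
      have hd := hc_trace_mul_re_nonneg (hXpsd k) (hMk1 k)
      rw [Matrix.mul_sub, Matrix.mul_one, Matrix.trace_sub, Complex.sub_re] at hd
      linarith
    have step2 : (∑ k, (ρ k * (N * N) * ρ k).trace) = hS.sqrt.trace := by
      have : ∀ k, (ρ k * (N * N) * ρ k).trace = ((N * N) * ρ k ^ 2).trace := fun k => by
        rw [Matrix.trace_mul_cycle, ← pow_two, Matrix.trace_mul_comm]
      simp_rw [this]
      rw [← Matrix.trace_sum, ← Matrix.mul_sum, ← hSdef, hNNS]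
    calc (∑ k, ((B k)ᴴ * B k).trace).re
        = ∑ k, ((ρ k * (N * N) * ρ k) * M k).trace.re := by
          rw [Complex.re_sum]; exact Finset.sum_congr rfl fun k _ => by rw [hBB k]
      _ ≤ ∑ k, (ρ k * (N * N) * ρ k).trace.re := Finset.sum_le_sum fun k _ => step1 k
      _ = (∑ k, (ρ k * (N * N) * ρ k).trace).re := (Complex.re_sum _ _).symm
      _ = Λ := by rw [step2]
  have ha_nn : 0 ≤ (∑ k, ((A k)ᴴ * A k).trace).re := by
    rw [Complex.re_sum]
    refine Finset.sum_nonneg fun k _ => ?_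
    rw [hc_trace_cts_re]
    exact Finset.sum_nonneg fun _ _ => Finset.sum_nonneg fun _ _ => Complex.normSq_nonneg _
  have hb_nn : 0 ≤ (∑ k, ((B k)ᴴ * B k).trace).re := by
    rw [Complex.re_sum]
    refine Finset.sum_nonneg fun k _ => ?_
    rw [hc_trace_cts_re]
    exact Finset.sum_nonneg fun _ _ => Finset.sum_nonneg fun _ _ => Complex.normSq_nonneg _
  -- Cauchy–Schwarz
  set v : EuclideanSpace ℂ (K × n × n) := WithLp.toLp 2 (fun p : K × n × n => A p.1 p.2.1 p.2.2) with hvdef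
  set w : EuclideanSpace ℂ (K × n × n) := WithLp.toLp 2 (fun p : K × n × n => B p.1 p.2.1 p.2.2) with hwdef
  have hinner : ∀ (X Y : K → Matrix n n ℂ),
      (@inner ℂ (EuclideanSpace ℂ (K × n × n)) _ (WithLp.toLp 2 (fun p : K × n × n => X p.1 p.2.1 p.2.2))
        (WithLp.toLp 2 (fun p : K × n × n => Y p.1 p.2.1 p.2.2)))
        = ∑ k, ((X k)ᴴ * Y k).trace := by
    intro X Y
    rw [PiLp.inner_apply]
    rw [Fintype.sum_prod_type]
    refine Finset.sum_congr rfl fun k _ => ?_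
    rw [Fintype.sum_prod_type, hc_trace_ct_mul]
    rw [Finset.sum_comm]
    exact Finset.sum_congr rfl fun j _ => Finset.sum_congr rfl fun i _ => by
      simp [RCLike.inner_apply, mul_comm]
  have hvw : (inner (𝕜 := ℂ) v w) = ∑ k, ((A k)ᴴ * B k).trace := hinner A B
  have hvv : (inner (𝕜 := ℂ) v v) = ∑ k, ((A k)ᴴ * A k).trace := hinner A A
  have hww : (inner (𝕜 := ℂ) w w) = ∑ k, ((B k)ᴴ * B k).trace := hinner B B
  have hCS : (inner (𝕜 := ℂ) v w).re ≤ ‖v‖ * ‖w‖ := by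
    refine le_trans ?_ (norm_inner_le_norm (𝕜 := ℂ) v w)
    exact (RCLike.re_le_norm (K := ℂ) _)
  have hnv : ‖v‖ = Real.sqrt ((∑ k, ((A k)ᴴ * A k).trace).re) := by
    rw [norm_eq_sqrt_re_inner (𝕜 := ℂ) v, hvv]
    rfl
  have hnw : ‖w‖ = Real.sqrt ((∑ k, ((B k)ᴴ * B k).trace).re) := by
    rw [norm_eq_sqrt_re_inner (𝕜 := ℂ) w, hww]
    rfl
  have goal_eq : (∑ k, ((M k) * (ρ k)).trace).re = (inner (𝕜 := ℂ) v w).re := by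
    rw [hvw]
    congr 1
    exact Finset.sum_congr rfl fun k _ => (hAB k).symm
  rw [goal_eq]
  calc (inner (𝕜 := ℂ) v w).re ≤ ‖v‖ * ‖w‖ := hCS
    _ = Real.sqrt ((∑ k, ((A k)ᴴ * A k).trace).re) *
        Real.sqrt ((∑ k, ((B k)ᴴ * B k).trace).re) := by rw [hnv, hnw]
    _ ≤ Real.sqrt Λ * Real.sqrt Λ :=
        mul_le_mul (Real.sqrt_le_sqrt ha_le) (Real.sqrt_le_sqrt hb_le)
          (Real.sqrt_nonneg _) (Real.sqrt_nonneg _)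
    _ = Λ := Real.mul_self_sqrt hΛ0
end

section
/- Let ρ_AB be a density matrix on A⊗B with A, B finite-dimensional, and ρ_A = Tr_B ρ_AB with rank r. Then the conditional min-entropy satisfies H_min(A|B) ≥ −log₂(√r · Tr_B√(Tr_A ρ_AB²)). -/
open Matrix Kronecker ComplexOrder
open Finset

/-- Partial trace over the first factor of a bipartite matrix on `A ⊗ B`. -/
noncomputable def ptrA {a b : Type*} [Fintype a]
    (ρ : Matrix (a × b) (a × b) ℂ) : Matrix b b ℂ :=
  Matrix.of fun j j' => ∑ i : a, ρ (i, j) (i, j')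

/-- Partial trace over the second factor of a bipartite matrix on `A ⊗ B`. -/
noncomputable def ptrB {a b : Type*} [Fintype b]
    (ρ : Matrix (a × b) (a × b) ℂ) : Matrix a a ℂ :=
  Matrix.of fun i i' => ∑ j : b, ρ (i, j) (i', j)

/-- The conditional min-entropy `H_min(A|B)_ρ
  = -log₂ inf { Tr υ : υ ≥ 0, ρ_AB ≤ 1_A ⊗ υ }`. -/
noncomputable def condMinEntropy {a b : Type*} [Fintype a] [Fintype b]
    [DecidableEq a] [DecidableEq b]
    (ρ : Matrix (a × b) (a × b) ℂ) : ℝ :=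
  -Real.logb 2 (sInf {t : ℝ | ∃ υ : Matrix b b ℂ, υ.PosSemidef ∧
    (((1 : Matrix a a ℂ) ⊗ₖ υ) - ρ).PosSemidef ∧ t = υ.trace.re})

lemma herm_dot_self_star {n : Type*} [Fintype n] {M : Matrix n n ℂ} (hM : M.IsHermitian) (x : n → ℂ) :
    star (star x ⬝ᵥ M *ᵥ x) = star x ⬝ᵥ M *ᵥ x := by
  calc star (star x ⬝ᵥ M *ᵥ x) = star (M *ᵥ x) ⬝ᵥ x := (star_dotProduct _ _).symm
    _ = (star x ᵥ* Mᴴ) ⬝ᵥ x := by rw [star_mulVec]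
    _ = star x ⬝ᵥ M *ᵥ x := by rw [hM.eq, ← dotProduct_mulVec]

lemma psd_of_herm_re {n : Type*} [Fintype n] {M : Matrix n n ℂ} (hM : M.IsHermitian)
    (h : ∀ x : n → ℂ, 0 ≤ (star x ⬝ᵥ M *ᵥ x).re) : M.PosSemidef := by
  refine .of_dotProduct_mulVec_nonneg hM fun x => ?_
  rw [Complex.le_def]
  refine ⟨by simpa using h x, ?_⟩
  have := congrArg Complex.im (herm_dot_self_star hM x)
  simp only [Complex.star_def, Complex.conj_im] at this
  simp only [Complex.zero_im]
  linarith

lemma psd_sub_of_sq {n : Type*} [Fintype n] [DecidableEq n] {A B : Matrix n n ℂ} (hA : A.PosSemidef) (hB : B.PosSemidef)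
    (h : (B * B - A * A).PosSemidef) : (B - A).PosSemidef := by
  have hM : (B - A).IsHermitian := hB.1.sub hA.1
  rw [hM.posSemidef_iff_eigenvalues_nonneg]
  intro i
  by_contra hneg
  push_neg at hneg
  rw [Pi.zero_apply] at hneg
  set t := hM.eigenvalues i with ht
  set v : n → ℂ := ⇑(hM.eigenvectorBasis i) with hv
  have hv0 : v ≠ 0 := by
    have := hM.eigenvectorBasis.toBasis.ne_zero i
    simpa [hv, OrthonormalBasis.coe_toBasis] using this
  have heig : (B - A) *ᵥ v = (t : ℂ) • v := by
    have h2 := hM.mulVec_eigenvectorBasis i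
    rw [← hv, ← ht] at h2
    rw [h2]
    ext k
    simp [Complex.real_smul]
  -- expand B*B - A*A = B*(B-A) + (B-A)*A
  have hsplit : B * B - A * A = B * (B - A) + (B - A) * A := by noncomm_ring
  have hq : star v ⬝ᵥ (B * B - A * A) *ᵥ v
      = (t : ℂ) * (star v ⬝ᵥ B *ᵥ v + star v ⬝ᵥ A *ᵥ v) := by
    rw [hsplit, add_mulVec, dotProduct_add]
    have e1 : star v ⬝ᵥ (B * (B - A)) *ᵥ v = (t : ℂ) * (star v ⬝ᵥ B *ᵥ v) := by
      rw [← mulVec_mulVec, heig, mulVec_smul, dotProduct_smul]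
      simp [mul_comm]
    have e2 : star v ⬝ᵥ ((B - A) * A) *ᵥ v = (t : ℂ) * (star v ⬝ᵥ A *ᵥ v) := by
      rw [← mulVec_mulVec, dotProduct_mulVec]
      have hrw : star v ᵥ* (B - A) = star ((B - A) *ᵥ v) := by rw [star_mulVec, hM.eq]
      rw [hrw, heig, star_smul, smul_dotProduct]
      simp [dotProduct_mulVec, Complex.real_smul]
    rw [e1, e2, mul_add]
  have hqb := hB.dotProduct_mulVec_nonneg v
  have hqa := hA.dotProduct_mulVec_nonneg v
  have hnn := h.dotProduct_mulVec_nonneg v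
  rw [hq] at hnn
  -- t < 0 and (qb + qa) ≥ 0 in ℂ
  have hsum : (0:ℂ) ≤ star v ⬝ᵥ B *ᵥ v + star v ⬝ᵥ A *ᵥ v := add_nonneg hqb hqa
  have hre : 0 ≤ ((t:ℂ) * (star v ⬝ᵥ B *ᵥ v + star v ⬝ᵥ A *ᵥ v)).re :=
    (Complex.le_def.mp hnn).1
  have hsre : 0 ≤ (star v ⬝ᵥ B *ᵥ v + star v ⬝ᵥ A *ᵥ v).re := (Complex.le_def.mp hsum).1
  have hsim : (star v ⬝ᵥ B *ᵥ v + star v ⬝ᵥ A *ᵥ v).im = 0 := ((Complex.le_def.mp hsum).2).symm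
  have hre' : ((t:ℂ) * (star v ⬝ᵥ B *ᵥ v + star v ⬝ᵥ A *ᵥ v)).re
      = t * (star v ⬝ᵥ B *ᵥ v + star v ⬝ᵥ A *ᵥ v).re := by
    rw [Complex.mul_re]
    simp [hsim]
  rw [hre'] at hre
  have hzero : (star v ⬝ᵥ B *ᵥ v + star v ⬝ᵥ A *ᵥ v).re = 0 := by
    nlinarith
  have hz : star v ⬝ᵥ B *ᵥ v + star v ⬝ᵥ A *ᵥ v = 0 := by
    apply Complex.ext <;> simp [hzero, hsim]
  have hb0 : star v ⬝ᵥ B *ᵥ v = 0 := le_antisymm (by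
    have : star v ⬝ᵥ B *ᵥ v = - (star v ⬝ᵥ A *ᵥ v) := by linear_combination hz
    rw [this]; simpa using hqa) hqb
  have ha0 : star v ⬝ᵥ A *ᵥ v = 0 := by linear_combination hz - hb0
  have hBv : B *ᵥ v = 0 := (hB.dotProduct_mulVec_zero_iff v).mp hb0
  have hAv : A *ᵥ v = 0 := (hA.dotProduct_mulVec_zero_iff v).mp ha0
  have : (t : ℂ) • v = 0 := by rw [← heig, sub_mulVec, hBv, hAv, sub_zero]
  have ht0 : (t:ℂ) ≠ 0 := by
    simpa using ne_of_lt hneg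
  rw [smul_eq_zero] at this
  exact hv0 (this.resolve_left ht0)

lemma normSq_sum_le {ι : Type*} (F : Finset ι) (w : ι → ℂ) :
    Complex.normSq (∑ m ∈ F, w m) ≤ F.card * ∑ m ∈ F, Complex.normSq (w m) := by
  have h1 : ‖∑ m ∈ F, w m‖ ≤ ∑ m ∈ F, ‖w m‖ := by
    simpa using norm_sum_le F w
  have h2 : (∑ m ∈ F, ‖w m‖)^2 ≤ F.card * ∑ m ∈ F, (‖w m‖)^2 :=
    sq_sum_le_card_mul_sum_sq
  calc Complex.normSq (∑ m ∈ F, w m) = (‖∑ m ∈ F, w m‖)^2 := (Complex.sq_norm _).symm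
    _ ≤ (∑ m ∈ F, ‖w m‖)^2 := by
        exact pow_le_pow_left₀ (norm_nonneg _) h1 2
    _ ≤ F.card * ∑ m ∈ F, (‖w m‖)^2 := h2
    _ = F.card * ∑ m ∈ F, Complex.normSq (w m) := by
        congr 1; exact Finset.sum_congr rfl fun m _ => Complex.sq_norm _

lemma normSq_sum_mul_le {ι : Type*} [Fintype ι] (v c : ι → ℂ) :
    Complex.normSq (∑ i, v i * c i)
      ≤ (∑ i, Complex.normSq (v i)) * (∑ i, Complex.normSq (c i)) := by
  have h1 : ‖∑ i, v i * c i‖ ≤ ∑ i, ‖v i‖ * ‖c i‖ := by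
    simpa [norm_mul] using norm_sum_le Finset.univ (fun i => v i * c i)
  have h2 : (∑ i, ‖v i‖ * ‖c i‖)^2
      ≤ (∑ i, (‖v i‖)^2) * (∑ i, (‖c i‖)^2) :=
    Finset.sum_mul_sq_le_sq_mul_sq _ _ _
  calc Complex.normSq (∑ i, v i * c i) = (‖∑ i, v i * c i‖)^2 := (Complex.sq_norm _).symm
    _ ≤ (∑ i, ‖v i‖ * ‖c i‖)^2 :=
        pow_le_pow_left₀ (norm_nonneg _) h1 2
    _ ≤ (∑ i, (‖v i‖)^2) * (∑ i, (‖c i‖)^2) := h2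
    _ = _ := by simp_rw [Complex.sq_norm]

def Nq {ι : Type*} [Fintype ι] (w : ι → ℂ) : ℝ := ∑ k, Complex.normSq (w k)

lemma Nq_nonneg {ι : Type*} [Fintype ι] (w : ι → ℂ) : 0 ≤ Nq w :=
  Finset.sum_nonneg fun _ _ => Complex.normSq_nonneg _

lemma star_dot_self_eq_Nq {ι : Type*} [Fintype ι] (w : ι → ℂ) :
    star w ⬝ᵥ w = ((Nq w : ℝ) : ℂ) := by
  simp only [dotProduct, Pi.star_apply, Nq]
  push_cast
  refine Finset.sum_congr rfl fun k _ => ?_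
  rw [Complex.normSq_eq_conj_mul_self]
  rfl

lemma herm_sq_dot {ι : Type*} [Fintype ι] {M : Matrix ι ι ℂ} (hM : M.IsHermitian)
    (y : ι → ℂ) :
    star y ⬝ᵥ (M * M) *ᵥ y = ((Nq (M *ᵥ y) : ℝ) : ℂ) := by
  rw [← Matrix.mulVec_mulVec, Matrix.dotProduct_mulVec]
  have hrw : star y ᵥ* M = star (M *ᵥ y) := by rw [Matrix.star_mulVec, hM.eq]
  rw [hrw, star_dot_self_eq_Nq]

lemma Nq_sum_le {ι κ : Type*} [Fintype κ] (F : Finset ι) (w : ι → κ → ℂ) :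
    Nq (∑ m ∈ F, w m) ≤ F.card * ∑ m ∈ F, Nq (w m) := by
  unfold Nq
  calc ∑ k, Complex.normSq ((∑ m ∈ F, w m) k)
      ≤ ∑ k : κ, ((F.card : ℝ) * ∑ m ∈ F, Complex.normSq (w m k)) :=
        Finset.sum_le_sum fun k _ => by
          simpa [Finset.sum_apply] using normSq_sum_le F (fun m => w m k)
    _ = F.card * ∑ m ∈ F, ∑ k, Complex.normSq (w m k) := by
        rw [← Finset.mul_sum]
        congr 1
        exact Finset.sum_comm

lemma Nq_combo_le {ι κ : Type*} [Fintype ι] [Fintype κ] (v : ι → ℂ) (u : ι → κ → ℂ)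
    (hv : ∑ i, Complex.normSq (v i) = 1) :
    Nq (∑ i, v i • u i) ≤ ∑ i, Nq (u i) := by
  unfold Nq
  calc ∑ k, Complex.normSq ((∑ i, v i • u i) k)
      ≤ ∑ k : κ, ∑ i, Complex.normSq (u i k) :=
        Finset.sum_le_sum fun k _ => by
          have := normSq_sum_mul_le v (fun i => u i k)
          rw [hv, one_mul] at this
          simpa [Finset.sum_apply] using this
    _ = ∑ i, ∑ k, Complex.normSq (u i k) := Finset.sum_comm

section core
variable {a b : Type*} [Fintype a] [Fintype b] [DecidableEq a] [DecidableEq b]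

lemma my_sum_mulVec {ι n m : Type*} [Fintype n] [Fintype m] (s : Finset ι)
    (A : ι → Matrix n m ℂ) (v : m → ℂ) :
    (∑ i ∈ s, A i) *ᵥ v = ∑ i ∈ s, (A i) *ᵥ v := by
  ext k
  simp only [Matrix.mulVec, dotProduct, Matrix.sum_apply, Finset.sum_apply,
    Finset.sum_mul]
  exact Finset.sum_comm

lemma my_dotProduct_sum {ι m : Type*} [Fintype m] (s : Finset ι)
    (v : m → ℂ) (w : ι → m → ℂ) :
    v ⬝ᵥ (∑ i ∈ s, w i) = ∑ i ∈ s, v ⬝ᵥ w i := by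
  simp only [dotProduct, Finset.sum_apply, Finset.mul_sum]
  exact Finset.sum_comm

/-- the `i`-th diagonal block of a matrix on `a × b` -/
def Mblk (M : Matrix (a × b) (a × b) ℂ) (i : a) : Matrix b b ℂ :=
  Matrix.of fun j j' => M (i, j) (i, j')

lemma ptrA_eq_sum_blk (M : Matrix (a × b) (a × b) ℂ) : ptrA M = ∑ i, Mblk M i := by
  ext j j'
  simp [ptrA, Mblk, Matrix.sum_apply]

lemma ptrA_dot (M : Matrix (a × b) (a × b) ℂ) (z : b → ℂ) :
    star z ⬝ᵥ (ptrA M) *ᵥ z = ∑ i : a, star z ⬝ᵥ (Mblk M i) *ᵥ z := by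
  rw [ptrA_eq_sum_blk, my_sum_mulVec, my_dotProduct_sum]

/-- embedding of a `b`-vector into row `i` -/
def emb (i : a) (z : b → ℂ) : a × b → ℂ := fun p => if p.1 = i then z p.2 else 0

lemma emb_dot (M : Matrix (a × b) (a × b) ℂ) (i : a) (z : b → ℂ) :
    star (emb i z) ⬝ᵥ M *ᵥ (emb i z) = star z ⬝ᵥ (Mblk M i) *ᵥ z := by
  simp only [dotProduct, mulVec, Fintype.sum_prod_type, emb, Pi.star_apply, Mblk]
  rw [Fintype.sum_eq_single i (fun x hx => by simp [hx])]
  refine Finset.sum_congr rfl fun j _ => ?_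
  simp only [if_pos rfl, Matrix.of_apply]
  congr 1
  rw [Fintype.sum_eq_single i (fun x hx => by simp [hx])]
  simp [dotProduct]

/-- elementary tensor -/
def tens (v : a → ℂ) (z : b → ℂ) : a × b → ℂ := fun p => v p.1 * z p.2

lemma tens_eq_sum_emb (v : a → ℂ) (z : b → ℂ) :
    tens v z = ∑ i, v i • emb i z := by
  funext p
  simp only [tens, emb, Finset.sum_apply, Pi.smul_apply, smul_eq_mul, mul_ite, mul_zero]
  rw [Fintype.sum_eq_single p.1 (fun x hx => by simp [Ne.symm hx])]
  simp

end core

section core2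
variable {a b : Type*} [Fintype a] [Fintype b] [DecidableEq a] [DecidableEq b]

/-- row i of x -/
def xrow (x : a × b → ℂ) (i : a) : b → ℂ := fun j => x (i, j)

lemma kron_one_dot (σ : Matrix b b ℂ) (x : a × b → ℂ) :
    star x ⬝ᵥ ((1 : Matrix a a ℂ) ⊗ₖ σ) *ᵥ x
      = ∑ i : a, star (xrow x i) ⬝ᵥ σ *ᵥ (xrow x i) := by
  simp only [dotProduct, mulVec, Fintype.sum_prod_type, kroneckerMap_apply, one_apply,
    Pi.star_apply, xrow]
  refine Finset.sum_congr rfl fun i _ => Finset.sum_congr rfl fun j _ => ?_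
  congr 1
  rw [Fintype.sum_eq_single i (fun x' hx' => by simp [Ne.symm hx'])]
  simp

lemma ptrA_herm {M : Matrix (a × b) (a × b) ℂ} (hM : M.IsHermitian) :
    (ptrA M).IsHermitian := by
  ext j j'
  simp only [conjTranspose_apply, ptrA, Matrix.of_apply, star_sum]
  exact Finset.sum_congr rfl fun i _ => hM.apply _ _

lemma ptrB_herm {M : Matrix (a × b) (a × b) ℂ} (hM : M.IsHermitian) :
    (ptrB M).IsHermitian := by
  ext i i'
  simp only [conjTranspose_apply, ptrB, Matrix.of_apply, star_sum]
  exact Finset.sum_congr rfl fun j _ => hM.apply _ _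

lemma kron_one_herm {σ : Matrix b b ℂ} (hσ : σ.IsHermitian) :
    ((1 : Matrix a a ℂ) ⊗ₖ σ).IsHermitian := by
  ext p q
  simp only [conjTranspose_apply, kroneckerMap_apply, one_apply]
  rcases eq_or_ne q.1 p.1 with h | h
  · simp [h, ← hσ.apply q.2 p.2]
  · simp [h, Ne.symm h]

end core2

section main
variable {a b : Type*} [Fintype a] [Fintype b] [DecidableEq a] [DecidableEq b]

lemma my_mulVec_vsum {ι n m : Type*} [Fintype n] [Fintype m] (s : Finset ι)
    (M : Matrix n m ℂ) (w : ι → m → ℂ) :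
    M *ᵥ (∑ i ∈ s, w i) = ∑ i ∈ s, M *ᵥ w i := by
  ext k
  simp only [Matrix.mulVec, dotProduct, Finset.sum_apply, Finset.mul_sum]
  exact Finset.sum_comm

/-- column-embedding of an `a`-vector at column `j` -/
def cemb (j : b) (v : a → ℂ) : a × b → ℂ := fun p => if p.2 = j then v p.1 else 0

def cMblk (M : Matrix (a × b) (a × b) ℂ) (j : b) : Matrix a a ℂ :=
  Matrix.of fun i i' => M (i, j) (i', j)

lemma ptrB_eq_sum_cblk (M : Matrix (a × b) (a × b) ℂ) : ptrB M = ∑ j, cMblk M j := by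
  ext i i'
  simp [ptrB, cMblk, Matrix.sum_apply]

lemma cemb_dot (M : Matrix (a × b) (a × b) ℂ) (j : b) (v : a → ℂ) :
    star (cemb j v) ⬝ᵥ M *ᵥ (cemb j v) = star v ⬝ᵥ (cMblk M j) *ᵥ v := by
  simp only [dotProduct, mulVec, Fintype.sum_prod_type_right, cemb, Pi.star_apply, cMblk]
  rw [Fintype.sum_eq_single j (fun y hy => by simp [hy])]
  refine Finset.sum_congr rfl fun i _ => ?_
  simp only [if_pos rfl, Matrix.of_apply]
  congr 1
  rw [Fintype.sum_eq_single j (fun y hy => by simp [hy])]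
  simp [dotProduct]

lemma sum_cemb_dot (M : Matrix (a × b) (a × b) ℂ) (v : a → ℂ) :
    ∑ j : b, star (cemb j v) ⬝ᵥ M *ᵥ (cemb j v) = star v ⬝ᵥ (ptrB M) *ᵥ v := by
  rw [ptrB_eq_sum_cblk, my_sum_mulVec, my_dotProduct_sum]
  exact Finset.sum_congr rfl fun j _ => (cemb_dot M j v)

lemma tens_eq_sum_cemb (v : a → ℂ) (z : b → ℂ) :
    tens v z = ∑ j, z j • cemb j v := by
  funext p
  simp only [tens, cemb, Finset.sum_apply, Pi.smul_apply, smul_eq_mul, mul_ite, mul_zero]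
  rw [Fintype.sum_eq_single p.2 (fun y hy => by simp [Ne.symm hy])]
  simp [mul_comm]

/-- a PSD ρ kills all tensors whose `a`-factor is a kernel vector of `ptrB ρ`. -/
lemma rho_kills {ρ : Matrix (a × b) (a × b) ℂ} (hρ : ρ.PosSemidef) (v : a → ℂ)
    (hv : ptrB ρ *ᵥ v = 0) (z : b → ℂ) : ρ *ᵥ tens v z = 0 := by
  have hcol : ∀ j : b, ρ *ᵥ cemb j v = 0 := by
    have hsum0 : ∑ j : b, star (cemb j v) ⬝ᵥ ρ *ᵥ (cemb j v) = 0 := by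
      rw [sum_cemb_dot, hv, dotProduct_zero]
    have hre0 : ∀ j : b, (star (cemb j v) ⬝ᵥ ρ *ᵥ (cemb j v)).re = 0 := by
      have hres : ∑ j : b, (star (cemb j v) ⬝ᵥ ρ *ᵥ (cemb j v)).re = 0 := by
        rw [← Complex.re_sum, hsum0, Complex.zero_re]
      have := (Finset.sum_eq_zero_iff_of_nonneg
        (fun j _ => (hρ.re_dotProduct_nonneg (cemb j v)))).mp hres
      exact fun j => this j (Finset.mem_univ j)
    intro j
    apply (hρ.dotProduct_mulVec_zero_iff (cemb j v)).mp
    have him := (Complex.le_def.mp (hρ.dotProduct_mulVec_nonneg (cemb j v))).2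
    exact Complex.ext (hre0 j) (by simpa using him.symm)
  rw [tens_eq_sum_cemb, my_mulVec_vsum]
  refine Finset.sum_eq_zero fun j _ => ?_
  rw [mulVec_smul, hcol j, smul_zero]

end main

section main2
variable {a b : Type*} [Fintype a] [Fintype b] [DecidableEq a] [DecidableEq b]

lemma triple_pull {ι κ : Type*} [Fintype ι] [Fintype κ] (c : κ → κ → ℂ) (g : ι → κ → κ → ℂ) :
    ∑ m : ι, ∑ j : κ, ∑ j' : κ, c j j' * g m j j'
      = ∑ j : κ, ∑ j' : κ, c j j' * ∑ m : ι, g m j j' := by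
  calc ∑ m : ι, ∑ j : κ, ∑ j' : κ, c j j' * g m j j'
      = ∑ j : κ, ∑ m : ι, ∑ j' : κ, c j j' * g m j j' := Finset.sum_comm
    _ = ∑ j : κ, ∑ j' : κ, ∑ m : ι, c j j' * g m j j' :=
        Finset.sum_congr rfl fun j _ => Finset.sum_comm
    _ = _ := by simp [Finset.mul_sum]

lemma dot_flat (σ : Matrix b b ℂ) (w : b → ℂ) :
    star w ⬝ᵥ σ *ᵥ w = ∑ j, ∑ j', σ j j' * (star (w j) * w j') := by
  simp only [dotProduct, mulVec, Pi.star_apply, Finset.mul_sum]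
  refine Finset.sum_congr rfl fun j _ => Finset.sum_congr rfl fun j' _ => by ring

/-- completeness of the unitary columns: reconstruction of `x`. -/
lemma x_eq_sum_tens (U : Matrix a a ℂ) (hUU : U * star U = 1) (x : a × b → ℂ) :
    x = ∑ m : a, tens (fun i => U i m) (fun j => ∑ i : a, star (U i m) * x (i, j)) := by
  funext p
  have h1 : (U * star U) p.1 p.1 = 1 := by rw [hUU, one_apply_eq]
  calc x p = ∑ i : a, (U * star U) p.1 i * x (i, p.2) := by
        rw [hUU]
        rw [Fintype.sum_eq_single p.1 (fun i hi => by simp [one_apply, Ne.symm hi])]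
        simp
    _ = ∑ i : a, ∑ m : a, U p.1 m * star (U i m) * x (i, p.2) := by
        refine Finset.sum_congr rfl fun i _ => ?_
        rw [mul_apply]
        rw [Finset.sum_mul]
        refine Finset.sum_congr rfl fun m _ => by simp [star_apply]
    _ = ∑ m : a, ∑ i : a, U p.1 m * star (U i m) * x (i, p.2) := Finset.sum_comm
    _ = _ := by
        simp only [Finset.sum_apply, tens, Finset.mul_sum]
        refine Finset.sum_congr rfl fun m _ => Finset.sum_congr rfl fun i _ => by ring

lemma zv_complete (U : Matrix a a ℂ) (hUU : U * star U = 1) (x : a × b → ℂ)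
    (σ : Matrix b b ℂ) :
    ∑ m : a, star (fun j => ∑ i : a, star (U i m) * x (i, j)) ⬝ᵥ
        σ *ᵥ (fun j => ∑ i : a, star (U i m) * x (i, j))
      = ∑ i : a, star (xrow x i) ⬝ᵥ σ *ᵥ (xrow x i) := by
  have hkey : ∀ j j' : b,
      (∑ m : a, star (∑ i : a, star (U i m) * x (i, j)) * (∑ i : a, star (U i m) * x (i, j')))
        = ∑ i : a, star (x (i, j)) * x (i, j') := by
    intro j j'
    have expand : ∀ m : a,
        star (∑ i : a, star (U i m) * x (i, j)) * (∑ i : a, star (U i m) * x (i, j'))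
          = ∑ i : a, ∑ i' : a, (star (x (i, j)) * x (i', j')) * (U i m * star (U i' m)) := by
      intro m
      rw [star_sum, Finset.sum_mul]
      refine Finset.sum_congr rfl fun i _ => ?_
      rw [Finset.mul_sum]
      refine Finset.sum_congr rfl fun i' _ => by
        simp only [star_mul', star_star]
        ring
    calc ∑ m : a, star (∑ i : a, star (U i m) * x (i, j)) * (∑ i : a, star (U i m) * x (i, j'))
        = ∑ m : a, ∑ i : a, ∑ i' : a, (star (x (i, j)) * x (i', j')) * (U i m * star (U i' m)) :=
          Finset.sum_congr rfl fun m _ => expand m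
      _ = ∑ i : a, ∑ i' : a, (star (x (i, j)) * x (i', j')) * ∑ m : a, (U i m * star (U i' m)) :=
          triple_pull _ _
      _ = ∑ i : a, ∑ i' : a, (star (x (i, j)) * x (i', j')) * (U * star U) i i' := by
          refine Finset.sum_congr rfl fun i _ => Finset.sum_congr rfl fun i' _ => ?_
          rw [mul_apply]
          refine congrArg _ (Finset.sum_congr rfl fun m _ => by simp [star_apply])
      _ = ∑ i : a, star (x (i, j)) * x (i, j') := by
          rw [hUU]
          refine Finset.sum_congr rfl fun i _ => ?_
          rw [Fintype.sum_eq_single i (fun i' hi' => by simp [one_apply, Ne.symm hi'])]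
          simp
  calc ∑ m : a, star (fun j => ∑ i : a, star (U i m) * x (i, j)) ⬝ᵥ
        σ *ᵥ (fun j => ∑ i : a, star (U i m) * x (i, j))
      = ∑ m : a, ∑ j, ∑ j', σ j j' *
          (star (∑ i : a, star (U i m) * x (i, j)) * (∑ i : a, star (U i m) * x (i, j'))) := by
        refine Finset.sum_congr rfl fun m _ => ?_
        rw [dot_flat]
    _ = ∑ j, ∑ j', σ j j' * ∑ m : a,
          (star (∑ i : a, star (U i m) * x (i, j)) * (∑ i : a, star (U i m) * x (i, j'))) :=
        triple_pull _ _
    _ = ∑ j, ∑ j', σ j j' * ∑ i : a, star (x (i, j)) * x (i, j') := by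
        refine Finset.sum_congr rfl fun j _ => Finset.sum_congr rfl fun j' _ => ?_
        rw [hkey j j']
    _ = ∑ i : a, ∑ j, ∑ j', σ j j' * (star (x (i, j)) * x (i, j')) :=
        (triple_pull _ _).symm
    _ = ∑ i : a, star (xrow x i) ⬝ᵥ σ *ᵥ (xrow x i) := by
        refine Finset.sum_congr rfl fun i _ => ?_
        rw [dot_flat]
        rfl

end main2

section main3
variable {a b : Type*} [Fintype a] [Fintype b] [DecidableEq a] [DecidableEq b]

theorem core_ineq {ρ : Matrix (a × b) (a × b) ℂ} (hρ : ρ.PosSemidef) (x : a × b → ℂ) :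
    (star x ⬝ᵥ (ρ * ρ) *ᵥ x).re
      ≤ ((ptrB ρ).rank : ℝ)
          * (star x ⬝ᵥ ((1 : Matrix a a ℂ) ⊗ₖ ptrA (ρ * ρ)) *ᵥ x).re := by
  classical
  have hρρ : (ρ * ρ).PosSemidef := by
    have h := Matrix.posSemidef_conjTranspose_mul_self ρ
    rwa [hρ.1] at h
  set σ : Matrix b b ℂ := ptrA (ρ * ρ) with hσdef
  have hA0 : (ptrB ρ).IsHermitian := ptrB_herm hρ.1
  set U : Matrix a a ℂ := (hA0.eigenvectorUnitary : Matrix a a ℂ) with hUdef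
  set μ : a → ℝ := hA0.eigenvalues with hμdef
  have hUU : U * star U = 1 := mem_unitaryGroup_iff.mp hA0.eigenvectorUnitary.2
  have hUU' : star U * U = 1 := mem_unitaryGroup_iff'.mp hA0.eigenvectorUnitary.2
  set v : a → a → ℂ := fun m i => U i m with hvdef
  set zv : a → b → ℂ := fun m j => ∑ i : a, star (U i m) * x (i, j) with hzvdef
  have hvb : ∀ m, v m = ⇑(hA0.eigenvectorBasis m) := by
    intro m; funext i
    simp [hvdef, hUdef]
  have heig : ∀ m, ptrB ρ *ᵥ v m = (μ m : ℂ) • v m := by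
    intro m
    rw [hvb m]
    have h2 := hA0.mulVec_eigenvectorBasis m
    rw [h2]
    funext i
    simp [Complex.real_smul, hμdef]
  have hunit : ∀ m, ∑ i, Complex.normSq (v m i) = 1 := by
    intro m
    have h1 : (star U * U) m m = 1 := by rw [hUU', one_apply_eq]
    rw [mul_apply] at h1
    have h2 : ∑ i, (Complex.normSq (U i m) : ℂ) = 1 := by
      rw [← h1]
      refine Finset.sum_congr rfl fun i _ => ?_
      rw [star_apply, Complex.normSq_eq_conj_mul_self]
      rfl
    have h3 : ((∑ i, Complex.normSq (U i m) : ℝ) : ℂ) = 1 := by push_cast; exact h2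
    exact_mod_cast h3
  -- per-m bound
  have hσre : ∀ z : b → ℂ, (star z ⬝ᵥ σ *ᵥ z).re = ∑ i : a, Nq (ρ *ᵥ emb i z) := by
    intro z
    rw [hσdef, ptrA_dot, Complex.re_sum]
    refine Finset.sum_congr rfl fun i _ => ?_
    rw [← emb_dot, herm_sq_dot hρ.1]
    simp
  have hper : ∀ m, ∀ z : b → ℂ, Nq (ρ *ᵥ tens (v m) z) ≤ (star z ⬝ᵥ σ *ᵥ z).re := by
    intro m z
    have h1 : ρ *ᵥ tens (v m) z = ∑ i, v m i • (ρ *ᵥ emb i z) := by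
      rw [tens_eq_sum_emb, my_mulVec_vsum]
      exact Finset.sum_congr rfl fun i _ => mulVec_smul ρ (v m i) (emb i z)
    rw [h1, hσre z]
    exact Nq_combo_le (v m) (fun i => ρ *ᵥ emb i z) (hunit m)
  have hσnn : ∀ z : b → ℂ, 0 ≤ (star z ⬝ᵥ σ *ᵥ z).re := by
    intro z
    rw [hσre z]
    exact Finset.sum_nonneg fun i _ => Nq_nonneg _
  -- the filter of nonzero eigenvalues
  set F : Finset a := Finset.univ.filter (fun m => μ m ≠ 0) with hFdef
  have hFcard : (F.card : ℕ) = (ptrB ρ).rank := by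
    rw [hA0.rank_eq_card_non_zero_eigs, Fintype.card_subtype]
  -- decompose ρ x
  have hxdecomp : ρ *ᵥ x = ∑ m ∈ F, ρ *ᵥ tens (v m) (zv m) := by
    have h0 : ρ *ᵥ x = ∑ m : a, ρ *ᵥ tens (v m) (zv m) := by
      conv_lhs => rw [x_eq_sum_tens U hUU x]
      exact my_mulVec_vsum _ _ _
    rw [h0]
    symm
    apply Finset.sum_subset (Finset.subset_univ F)
    intro m _ hm
    have hμ0 : μ m = 0 := by
      by_contra hne
      exact hm (Finset.mem_filter.mpr ⟨Finset.mem_univ m, hne⟩)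
    apply rho_kills hρ
    rw [heig m, hμ0]
    simp
  -- chain
  have lhs_eq : (star x ⬝ᵥ (ρ * ρ) *ᵥ x).re = Nq (ρ *ᵥ x) := by
    rw [herm_sq_dot hρ.1]; simp
  have rhs_eq : (star x ⬝ᵥ ((1 : Matrix a a ℂ) ⊗ₖ σ) *ᵥ x).re
      = ∑ m : a, (star (zv m) ⬝ᵥ σ *ᵥ (zv m)).re := by
    rw [kron_one_dot, ← zv_complete U hUU x σ, Complex.re_sum]
  rw [lhs_eq, rhs_eq]
  calc Nq (ρ *ᵥ x) = Nq (∑ m ∈ F, ρ *ᵥ tens (v m) (zv m)) := by rw [hxdecomp]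
    _ ≤ F.card * ∑ m ∈ F, Nq (ρ *ᵥ tens (v m) (zv m)) := Nq_sum_le _ _
    _ ≤ F.card * ∑ m ∈ F, (star (zv m) ⬝ᵥ σ *ᵥ (zv m)).re := by
        apply mul_le_mul_of_nonneg_left _ (Nat.cast_nonneg _)
        exact Finset.sum_le_sum fun m _ => hper m (zv m)
    _ ≤ F.card * ∑ m : a, (star (zv m) ⬝ᵥ σ *ᵥ (zv m)).re := by
        apply mul_le_mul_of_nonneg_left _ (Nat.cast_nonneg _)
        exact Finset.sum_le_sum_of_subset_of_nonneg (Finset.subset_univ F)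
          (fun m _ _ => hσnn (zv m))
    _ = ((ptrB ρ).rank : ℝ) * ∑ m : a, (star (zv m) ⬝ᵥ σ *ᵥ (zv m)).re := by
        rw [← hFcard]

end main3

section final
variable {a b : Type*} [Fintype a] [Fintype b] [DecidableEq a] [DecidableEq b]

lemma diag_as_dot {n : Type*} [Fintype n] [DecidableEq n] (M : Matrix n n ℂ) (i : n) :
    star (Pi.single i (1:ℂ)) ⬝ᵥ M *ᵥ (Pi.single i (1:ℂ)) = M i i := by
  rw [mulVec_single]
  simp only [dotProduct, Pi.star_apply, Pi.single_apply, mul_one]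
  rw [Fintype.sum_eq_single i (fun k hk => by simp [hk])]
  simp

lemma psd_diag_nonneg {n : Type*} [Fintype n] [DecidableEq n] {M : Matrix n n ℂ}
    (hM : M.PosSemidef) (i : n) : 0 ≤ M i i := by
  have := hM.dotProduct_mulVec_nonneg (Pi.single i (1:ℂ))
  rwa [diag_as_dot] at this

lemma psd_trace_re_nonneg {n : Type*} [Fintype n] [DecidableEq n] {M : Matrix n n ℂ}
    (hM : M.PosSemidef) : 0 ≤ M.trace.re := by
  have : M.trace = ∑ i, M i i := by simp [Matrix.trace, Matrix.diag]
  rw [this, Complex.re_sum]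
  exact Finset.sum_nonneg fun i _ => by
    simpa using (Complex.le_def.mp (psd_diag_nonneg hM i)).1

lemma psd_eq_zero_of_trace_re {n : Type*} [Fintype n] [DecidableEq n] {M : Matrix n n ℂ}
    (hM : M.PosSemidef) (h : M.trace.re = 0) : M = 0 := by
  have hdiag : ∀ i, M i i = 0 := by
    have hre : ∀ i, (M i i).re = 0 := by
      have hsum : ∑ i, (M i i).re = 0 := by
        have htr : M.trace = ∑ i, M i i := by simp [Matrix.trace, Matrix.diag]
        rw [← Complex.re_sum, ← htr, h]
      have := (Finset.sum_eq_zero_iff_of_nonneg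
        (fun i _ => (Complex.le_def.mp (psd_diag_nonneg hM i)).1)).mp hsum
      exact fun i => this i (Finset.mem_univ i)
    intro i
    have him := (Complex.le_def.mp (psd_diag_nonneg hM i)).2
    exact Complex.ext (hre i) (by simpa using him.symm)
  have hcol : ∀ i, M *ᵥ Pi.single i 1 = 0 := by
    intro i
    apply (hM.dotProduct_mulVec_zero_iff _).mp
    rw [diag_as_dot, hdiag i]
  ext k i
  have := congrFun (hcol i) k
  rw [mulVec_single] at this
  simpa using this

lemma cmul_nonneg {c : ℝ} (hc : 0 ≤ c) {q : ℂ} (hq : 0 ≤ q) : 0 ≤ (c : ℂ) * q := by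
  rw [Complex.le_def] at hq ⊢
  obtain ⟨h1, h2⟩ := hq
  constructor
  · rw [Complex.re_ofReal_mul]
    exact mul_nonneg hc (by simpa using h1)
  · simp only [Complex.zero_im] at h2 ⊢
    rw [Complex.mul_im]
    simp [← h2]

lemma psd_smul {n : Type*} [Fintype n] {M : Matrix n n ℂ} (hM : M.PosSemidef)
    {c : ℝ} (hc : 0 ≤ c) : ((c : ℂ) • M).PosSemidef := by
  refine Matrix.PosSemidef.of_dotProduct_mulVec_nonneg ?_ ?_
  · rw [Matrix.IsHermitian, conjTranspose_smul, hM.1.eq]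
    congr 1
    simp [Complex.ext_iff]
  · intro x
    rw [smul_mulVec, dotProduct_smul, smul_eq_mul]
    exact cmul_nonneg hc (hM.dotProduct_mulVec_nonneg x)

lemma kron_one_psd {υ : Matrix b b ℂ} (hυ : υ.PosSemidef) :
    ((1 : Matrix a a ℂ) ⊗ₖ υ).PosSemidef := by
  refine .of_dotProduct_mulVec_nonneg (kron_one_herm hυ.1) fun x => ?_
  rw [kron_one_dot]
  exact Finset.sum_nonneg fun i _ => hυ.dotProduct_mulVec_nonneg (xrow x i)

end final

/-- Lower bound on the conditional min-entropy (the `s = 0` case):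
`H_min(A|B) ≥ -log₂ (√r · Tr_B √(Tr_A ρ_AB²))`, where `r` is the rank of
`ρ_A = Tr_B ρ_AB`. (The square root `√(Tr_A ρ_AB²)` is characterized as the
positive semidefinite `T` with `T * T = Tr_A ρ_AB²`.) -/
theorem condMinEntropy_lower_bound
    {a b : Type*} [Fintype a] [Fintype b] [DecidableEq a] [DecidableEq b]
    (ρ : Matrix (a × b) (a × b) ℂ) (hρ : ρ.PosSemidef) (htr : ρ.trace = 1)
    (T : Matrix b b ℂ) (hT : T.PosSemidef) (hTsq : T * T = ptrA (ρ * ρ)) :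
    -Real.logb 2 (Real.sqrt ((ptrB ρ).rank) * T.trace.re) ≤ condMinEntropy ρ := by
  classical
  set r : ℕ := (ptrB ρ).rank with hr
  set c : ℝ := Real.sqrt r with hc
  set σ : Matrix b b ℂ := ptrA (ρ * ρ) with hσdef
  have hρρ : (ρ * ρ).PosSemidef := by
    have h := Matrix.posSemidef_conjTranspose_mul_self ρ
    rwa [hρ.1] at h
  have hNa : Nonempty a := by
    rcases isEmpty_or_nonempty a with h | h
    · exfalso
      have h0 : ρ.trace = 0 := by
        have he : (Finset.univ : Finset (a × b)) = ∅ := Finset.univ_eq_empty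
        simp [Matrix.trace, he]
      rw [htr] at h0
      exact one_ne_zero h0
    · exact h
  set υ : Matrix b b ℂ := (c : ℂ) • T with hυdef
  have hυpsd : υ.PosSemidef := psd_smul hT (Real.sqrt_nonneg _)
  have hB : ((1 : Matrix a a ℂ) ⊗ₖ υ).PosSemidef := kron_one_psd hυpsd
  have hD : (((r : ℕ) : ℂ) • ((1 : Matrix a a ℂ) ⊗ₖ σ) - ρ * ρ).PosSemidef := by
    apply psd_of_herm_re
    · have h1 : ((1 : Matrix a a ℂ) ⊗ₖ σ).IsHermitian := kron_one_herm (ptrA_herm hρρ.1)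
      have h2 : (((r : ℕ) : ℂ) • ((1 : Matrix a a ℂ) ⊗ₖ σ)).IsHermitian := by
        rw [Matrix.IsHermitian, conjTranspose_smul, h1.eq]
        congr 1
        simp [Complex.ext_iff]
      exact h2.sub hρρ.1
    · intro x
      rw [sub_mulVec, dotProduct_sub, Complex.sub_re, smul_mulVec, dotProduct_smul,
        smul_eq_mul]
      have hcast : (((r : ℕ) : ℂ) * (star x ⬝ᵥ ((1 : Matrix a a ℂ) ⊗ₖ σ) *ᵥ x)).re
          = ((r : ℕ) : ℝ) * (star x ⬝ᵥ ((1 : Matrix a a ℂ) ⊗ₖ σ) *ᵥ x).re := by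
        rw [show ((r : ℕ) : ℂ) = (((r : ℕ) : ℝ) : ℂ) by push_cast; ring, Complex.re_ofReal_mul]
      rw [hcast]
      have := core_ineq hρ x
      rw [← hσdef, ← hr] at this
      linarith
  have hfeas : (((1 : Matrix a a ℂ) ⊗ₖ υ) - ρ).PosSemidef := by
    apply psd_sub_of_sq hρ hB
    have hυυ : υ * υ = ((r : ℕ) : ℂ) • σ := by
      rw [hυdef, smul_mul_smul_comm, hTsq]
      congr 1
      rw [← Complex.ofReal_mul, Real.mul_self_sqrt (Nat.cast_nonneg r)]
      simp
    have hBB : ((1 : Matrix a a ℂ) ⊗ₖ υ) * ((1 : Matrix a a ℂ) ⊗ₖ υ)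
        = ((r : ℕ) : ℂ) • ((1 : Matrix a a ℂ) ⊗ₖ σ) := by
      rw [← mul_kronecker_mul, one_mul, hυυ, kronecker_smul]
    rw [hBB]
    exact hD
  have hυtr : υ.trace.re = c * T.trace.re := by
    rw [hυdef, trace_smul, smul_eq_mul, Complex.re_ofReal_mul]
  set S : Set ℝ := {t : ℝ | ∃ υ' : Matrix b b ℂ, υ'.PosSemidef ∧
    (((1 : Matrix a a ℂ) ⊗ₖ υ') - ρ).PosSemidef ∧ t = υ'.trace.re} with hSdef
  have hmem : c * T.trace.re ∈ S := ⟨υ, hυpsd, hfeas, hυtr.symm⟩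
  have hSlb : ∀ t ∈ S, ((Fintype.card a : ℝ))⁻¹ ≤ t := by
    rintro t ⟨υ', hυ', hf', rfl⟩
    have h1 : 0 ≤ ((((1 : Matrix a a ℂ) ⊗ₖ υ') - ρ)).trace.re := psd_trace_re_nonneg hf'
    have h2 : ((((1 : Matrix a a ℂ) ⊗ₖ υ') - ρ)).trace
        = (Fintype.card a : ℂ) * υ'.trace - 1 := by
      rw [trace_sub, trace_kronecker, trace_one, htr]
    rw [h2] at h1
    have h3 : 0 ≤ (Fintype.card a : ℝ) * υ'.trace.re - 1 := by
      have : ((Fintype.card a : ℂ) * υ'.trace - 1).re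
          = (Fintype.card a : ℝ) * υ'.trace.re - 1 := by
        rw [Complex.sub_re, show ((Fintype.card a : ℕ) : ℂ) = (((Fintype.card a : ℕ) : ℝ) : ℂ)
          by push_cast; ring, Complex.re_ofReal_mul]
        simp
      linarith [this ▸ h1]
    have hcard : (0:ℝ) < Fintype.card a := by
      have := Fintype.card_pos_iff.mpr hNa
      exact_mod_cast this
    rw [inv_eq_one_div, div_le_iff₀ hcard]
    linarith
  have hSne : S.Nonempty := ⟨_, hmem⟩
  have hbdd : BddBelow S := ⟨(Fintype.card a : ℝ)⁻¹, fun t ht => hSlb t ht⟩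
  have hsinf_le : sInf S ≤ c * T.trace.re := csInf_le hbdd hmem
  have hsinf_pos : 0 < sInf S := by
    have hpos : (0:ℝ) < (Fintype.card a : ℝ)⁻¹ := by
      have := Fintype.card_pos_iff.mpr hNa
      positivity
    exact lt_of_lt_of_le hpos (le_csInf hSne hSlb)
  unfold condMinEntropy
  rw [← hSdef]
  apply neg_le_neg
  exact Real.logb_le_logb_of_le one_lt_two hsinf_pos hsinf_le
end

section
/- Let ψ_AB be a unit vector in A⊗B (A, B finite-dimensional) with reduced state ρ_A = Tr_B|ψ⟩⟨ψ|. Then H_min(A|B) for the pure state |ψ_AB⟩⟨ψ_AB| equals −2 log₂(Tr_A √ρ_A). -/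
open Matrix Kronecker ComplexOrder

namespace CondMinAux

open Complex

variable {n m : Type*} [Fintype n] [Fintype m]

/-- Flatten a matrix into a vector indexed by pairs. -/
def flat (A : Matrix n m ℂ) : n × m → ℂ := fun p => A p.1 p.2

lemma trace_eq_dot (A B : Matrix n m ℂ) :
    (Aᴴ * B).trace = star (flat A) ⬝ᵥ flat B := by
  simp only [Matrix.trace, Matrix.diag, Matrix.mul_apply, conjTranspose_apply,
    dotProduct, Fintype.sum_prod_type, flat, Pi.star_apply]
  rw [Finset.sum_comm]

lemma cs_dot {k : Type*} [Fintype k] (x y : k → ℂ) :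
    normSq (star x ⬝ᵥ y) ≤ (star x ⬝ᵥ x).re * (star y ⬝ᵥ y).re := by
  let x' : EuclideanSpace ℂ k := (WithLp.equiv 2 _).symm x
  let y' : EuclideanSpace ℂ k := (WithLp.equiv 2 _).symm y
  have hxy : (inner ℂ x' y' : ℂ) = star x ⬝ᵥ y := by
    rw [EuclideanSpace.inner_eq_star_dotProduct, dotProduct_comm]; rfl
  have hx : (inner ℂ x' x' : ℂ).re = (star x ⬝ᵥ x).re := by
    rw [EuclideanSpace.inner_eq_star_dotProduct, dotProduct_comm]; rfl
  have hy : (inner ℂ y' y' : ℂ).re = (star y ⬝ᵥ y).re := by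
    rw [EuclideanSpace.inner_eq_star_dotProduct, dotProduct_comm]; rfl
  have h := norm_inner_le_norm (𝕜 := ℂ) x' y'
  have h2 : ‖(inner ℂ x' y' : ℂ)‖ ^ 2 ≤ ‖x'‖ ^ 2 * ‖y'‖ ^ 2 := by
    rw [← mul_pow]
    exact pow_le_pow_left₀ (norm_nonneg _) h 2
  have hx2 : ((inner ℂ x' x' : ℂ)).re = ‖x'‖ ^ 2 := by
    rw [inner_self_eq_norm_sq_to_K]; simp [← Complex.ofReal_pow]
  have hy2 : ((inner ℂ y' y' : ℂ)).re = ‖y'‖ ^ 2 := by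
    rw [inner_self_eq_norm_sq_to_K]; simp [← Complex.ofReal_pow]
  rw [← hxy, ← hx, ← hy, hx2, hy2, ← Complex.sq_norm]
  exact h2

lemma trace_nonneg' {M : Matrix n n ℂ} [DecidableEq n] (hM : M.PosSemidef) :
    0 ≤ M.trace := by
  have h : ∀ i, 0 ≤ M i i := fun i => by
    have := hM.dotProduct_mulVec_nonneg (Pi.single i 1)
    simpa [dotProduct, Pi.single_apply, apply_ite] using this
  exact Finset.sum_nonneg fun i _ => h i

lemma trace_mul_nonneg {A B : Matrix n n ℂ} [DecidableEq n]
    (hA : A.PosSemidef) (hB : B.PosSemidef) : 0 ≤ (A * B).trace := by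
  open scoped MatrixOrder in
  obtain ⟨S, hS, -, hSA⟩ := sub_zero A ▸ CFC.exists_sqrt_of_isSelfAdjoint_of_quasispectrumRestricts
    hA.isHermitian (QuasispectrumRestricts.nnreal_of_nonneg hA.nonneg)
  have h2 : (A * B).trace = (S * B * Sᴴ).trace := by
    rw [sub_zero] at hSA
    conv_lhs => rw [← hSA]
    rw [mul_assoc, trace_mul_comm, show Sᴴ = S from hS]
  rw [h2]
  exact trace_nonneg' (hB.mul_mul_conjTranspose_same _)

lemma psd_smul {M : Matrix n n ℂ} [DecidableEq n] (hM : M.PosSemidef) {c : ℂ} (hc : 0 ≤ c) :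
    (c • M).PosSemidef := by
  obtain ⟨hre, him⟩ := Complex.le_def.mp hc
  refine Matrix.PosSemidef.of_dotProduct_mulVec_nonneg ?_ ?_
  · have hcc : star c = c := by
      apply Complex.ext <;> simp [Complex.conj_re, Complex.conj_im, ← him]
    show (c • M)ᴴ = c • M
    rw [conjTranspose_smul, hM.1.eq, hcc]
  · intro x
    rw [smul_mulVec, dotProduct_smul, smul_eq_mul]
    exact mul_nonneg hc (hM.dotProduct_mulVec_nonneg x)

lemma dot_vecMulVec {k : Type*} [Fintype k] (u φ : k → ℂ) :
    star φ ⬝ᵥ (Matrix.vecMulVec u (star u) *ᵥ φ) =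
      (star u ⬝ᵥ φ) * star (star u ⬝ᵥ φ) := by
  simp only [dotProduct, Matrix.mulVec, Matrix.vecMulVec_apply, Pi.star_apply, dotProduct,
    Finset.mul_sum, Finset.sum_mul, star_sum, star_mul', star_star]
  apply Finset.sum_congr rfl; intro i _
  apply Finset.sum_congr rfl; intro j _
  ring

lemma dot_kron [DecidableEq n] (υ : Matrix m m ℂ) (φ : n × m → ℂ) :
    star φ ⬝ᵥ (((1 : Matrix n n ℂ) ⊗ₖ υ) *ᵥ φ) =
      ((Matrix.of fun i j => φ (i, j))ᴴ * (Matrix.of fun i j => φ (i, j)) * υᵀ).trace := by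
  simp only [dotProduct, Matrix.mulVec, Matrix.trace, Matrix.diag, Matrix.mul_apply,
    Matrix.kroneckerMap_apply, Matrix.one_apply, Matrix.conjTranspose_apply,
    Matrix.transpose_apply, Matrix.of_apply, Pi.star_apply,
    Fintype.sum_prod_type, ite_mul, one_mul, zero_mul, dotProduct,
    Finset.sum_ite_eq, Finset.sum_ite_eq', Finset.mem_univ, if_true]
  rw [Finset.sum_comm]
  apply Finset.sum_congr rfl; intro j _
  have step : ∀ x : n, (∑ x1 : n, ∑ x2 : m, if x = x1 then υ j x2 * φ (x1, x2) else 0)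
      = ∑ x2 : m, υ j x2 * φ (x, x2) := by
    intro x
    rw [Finset.sum_comm]
    simp [Finset.sum_ite_eq]
  simp only [step, Finset.mul_sum]
  rw [Finset.sum_comm]
  apply Finset.sum_congr rfl; intro b _
  rw [Finset.sum_mul]
  apply Finset.sum_congr rfl; intro a _
  ring

lemma kron_one_conjTranspose [DecidableEq n] (υ : Matrix m m ℂ) :
    ((1 : Matrix n n ℂ) ⊗ₖ υ)ᴴ = (1 : Matrix n n ℂ) ⊗ₖ υᴴ := by
  ext ⟨i, j⟩ ⟨i', j'⟩
  simp only [Matrix.conjTranspose_apply, Matrix.kroneckerMap_apply, Matrix.one_apply]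
  by_cases h : i = i' <;> simp [h, eq_comm]

lemma dot_conjT_mulVec (A : Matrix n m ℂ) (x : n → ℂ) (y : m → ℂ) :
    star x ⬝ᵥ (A *ᵥ y) = star (Aᴴ *ᵥ x) ⬝ᵥ y := by
  rw [dotProduct_mulVec, star_mulVec, conjTranspose_conjTranspose]

lemma self_dot_re_nonneg (x : n → ℂ) : 0 ≤ (star x ⬝ᵥ x).re :=
  (Complex.le_def.mp (dotProduct_star_self_nonneg x)).1

lemma self_dot_im (x : n → ℂ) : (star x ⬝ᵥ x).im = 0 :=
  ((Complex.le_def.mp (dotProduct_star_self_nonneg x)).2).symm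

lemma contraction [DecidableEq n] [DecidableEq m] {A : Matrix n m ℂ}
    (h : ((1 : Matrix n n ℂ) - A * Aᴴ).PosSemidef) :
    ((1 : Matrix m m ℂ) - Aᴴ * A).PosSemidef := by
  refine Matrix.PosSemidef.of_dotProduct_mulVec_nonneg ?_ ?_
  · show _ = _
    simp only [conjTranspose_sub, conjTranspose_mul, conjTranspose_one,
      conjTranspose_conjTranspose]
  · intro v
    set z := A *ᵥ v with hz
    set w := Aᴴ *ᵥ z with hw
    have e1 : star v ⬝ᵥ ((Aᴴ * A) *ᵥ v) = star z ⬝ᵥ z := by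
      rw [← mulVec_mulVec, dot_conjT_mulVec Aᴴ v (A *ᵥ v), conjTranspose_conjTranspose]
    have e2 : star z ⬝ᵥ ((A * Aᴴ) *ᵥ z) = star w ⬝ᵥ w := by
      rw [← mulVec_mulVec, dot_conjT_mulVec A z (Aᴴ *ᵥ z)]
    have e3 : star z ⬝ᵥ z = star w ⬝ᵥ v := by
      rw [hz, dot_conjT_mulVec A z v]
    set q := (star z ⬝ᵥ z).re with hq
    set r := (star v ⬝ᵥ v).re with hr
    have hq0 : 0 ≤ q := self_dot_re_nonneg z
    have hr0 : 0 ≤ r := self_dot_re_nonneg v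
    have h2 := h.dotProduct_mulVec_nonneg z
    rw [sub_mulVec, dotProduct_sub, one_mulVec, e2] at h2
    have hw_le : (star w ⬝ᵥ w).re ≤ q := by
      have := (Complex.le_def.mp h2).1
      simp only [Complex.zero_re, Complex.sub_re] at this
      linarith
    have hcs := cs_dot w v
    have hnsq : normSq (star w ⬝ᵥ v) = q ^ 2 := by
      rw [← e3, normSq_apply, hq, self_dot_im]
      ring
    have hineq : q ^ 2 ≤ q * r := by
      calc q ^ 2 = normSq (star w ⬝ᵥ v) := hnsq.symm
        _ ≤ (star w ⬝ᵥ w).re * r := hcs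
        _ ≤ q * r := by nlinarith [self_dot_re_nonneg w]
    have hqr : q ≤ r := by
      rcases eq_or_lt_of_le hq0 with hq' | hq'
      · linarith
      · nlinarith
    rw [sub_mulVec, dotProduct_sub, one_mulVec, e1, Complex.le_def]
    constructor
    · simp only [Complex.zero_re, Complex.sub_re]; linarith
    · simp [Complex.sub_im, self_dot_im]

variable [DecidableEq n]

/-- Functional calculus matrix `U * diag (g ∘ d) * Uᴴ`. -/
noncomputable def fc (U : Matrix n n ℂ) (d : n → ℝ) (g : ℝ → ℝ) : Matrix n n ℂ :=
  U * Matrix.diagonal (fun i => (g (d i) : ℂ)) * Uᴴ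

variable {U : Matrix n n ℂ} {d : n → ℝ}

lemma fc_mul (hU : Uᴴ * U = 1) (g h : ℝ → ℝ) :
    fc U d g * fc U d h = fc U d fun t => g t * h t := by
  simp only [fc, Matrix.mul_assoc]
  rw [← Matrix.mul_assoc Uᴴ U, hU, one_mul,
    ← Matrix.mul_assoc (Matrix.diagonal _) (Matrix.diagonal _), diagonal_mul_diagonal]
  push_cast
  rfl

lemma fc_conjT (g : ℝ → ℝ) : (fc U d g)ᴴ = fc U d g := by
  have hst : star (fun i => (g (d i) : ℂ)) = fun i => (g (d i) : ℂ) := by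
    funext i; simp [Complex.conj_ofReal]
  simp only [fc, conjTranspose_mul, conjTranspose_conjTranspose, diagonal_conjTranspose, hst,
    Matrix.mul_assoc]

lemma fc_trace (hU : Uᴴ * U = 1) (g : ℝ → ℝ) :
    (fc U d g).trace = ((∑ i, g (d i) : ℝ) : ℂ) := by
  rw [fc, Matrix.trace_mul_cycle, hU, one_mul, trace_diagonal]
  push_cast
  rfl

lemma fc_psd (g : ℝ → ℝ) (hg : ∀ i, 0 ≤ g (d i)) : (fc U d g).PosSemidef :=
  (posSemidef_diagonal_iff.mpr fun i => by exact_mod_cast hg i).mul_mul_conjTranspose_same U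

lemma fc_one (hU' : U * Uᴴ = 1) : fc U d (fun _ => 1) = 1 := by
  have h1 : (Matrix.diagonal fun _ : n => ((1 : ℝ) : ℂ)) = (1 : Matrix n n ℂ) := by
    simp
  rw [fc, h1, mul_one, hU']

lemma fc_sub (g h : ℝ → ℝ) :
    fc U d g - fc U d h = fc U d fun t => g t - h t := by
  simp only [fc]
  rw [← Matrix.sub_mul, ← Matrix.mul_sub, diagonal_sub]
  push_cast
  rfl

lemma fc_congr {g h : ℝ → ℝ} (he : ∀ i, g (d i) = h (d i)) : fc U d g = fc U d h := by
  unfold fc; congr 1; congr 1; ext i j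
  by_cases hij : i = j
  · subst hij; simp [Matrix.diagonal_apply, he i]
  · simp [Matrix.diagonal_apply, hij]

end CondMinAux

/-- For a pure bipartite state `ρ_AB = |ψ⟩⟨ψ|` with reduced state
`ρ_A = Tr_B |ψ⟩⟨ψ|`, the conditional min-entropy equals `-2 log₂ (Tr_A √ρ_A)`,
where `√ρ_A` is characterized as the positive semidefinite `T` with `T * T = ρ_A`. -/
theorem condMinEntropy_pure_state
    {a b : Type*} [Fintype a] [Fintype b] [DecidableEq a] [DecidableEq b]
    (ψ : a × b → ℂ) (hψ : star ψ ⬝ᵥ ψ = 1)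
    (T : Matrix a a ℂ) (hT : T.PosSemidef)
    (hTsq : T * T = ptrB (Matrix.vecMulVec ψ (star ψ))) :
    condMinEntropy (Matrix.vecMulVec ψ (star ψ)) =
      -(2 * Real.logb 2 (T.trace.re)) := by
  classical
  set X : Matrix a b ℂ := Matrix.of fun i j => ψ (i, j) with hXdef
  have hflatX : CondMinAux.flat X = ψ := by funext p; simp [CondMinAux.flat, hXdef]
  have hXX : X * Xᴴ = T * T := by
    rw [hTsq]; ext i i'
    simp [Matrix.mul_apply, ptrB, Matrix.vecMulVec_apply, hXdef, Matrix.conjTranspose_apply]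
  -- spectral data
  have hH : T.IsHermitian := hT.1
  set U : Matrix a a ℂ := (hH.eigenvectorUnitary : Matrix a a ℂ) with hUdef
  have hU : Uᴴ * U = 1 := by
    simpa [Matrix.star_eq_conjTranspose] using
      Matrix.mem_unitaryGroup_iff'.mp hH.eigenvectorUnitary.2
  have hU' : U * Uᴴ = 1 := by
    simpa [Matrix.star_eq_conjTranspose] using
      Matrix.mem_unitaryGroup_iff.mp hH.eigenvectorUnitary.2
  set d : a → ℝ := hH.eigenvalues with hddef
  have hd : ∀ i, 0 ≤ d i := fun i => hT.eigenvalues_nonneg i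
  have hTfc : T = CondMinAux.fc U d id := by
    simpa [CondMinAux.fc, Function.comp_def, Matrix.star_eq_conjTranspose] using hH.spectral_theorem
  -- functional calculus matrices
  set gW : ℝ → ℝ := Real.sqrt with hgW
  set gR : ℝ → ℝ := (fun t => if t = 0 then 0 else (Real.sqrt t)⁻¹) with hgR
  set gP : ℝ → ℝ := (fun t => if t = 0 then 0 else t⁻¹) with hgP
  set gE : ℝ → ℝ := (fun t => if t = 0 then 0 else 1) with hgE
  set W : Matrix a a ℂ := CondMinAux.fc U d gW with hWdef
  set R : Matrix a a ℂ := CondMinAux.fc U d gR with hRdef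
  set P : Matrix a a ℂ := CondMinAux.fc U d gP with hPdef
  set E : Matrix a a ℂ := CondMinAux.fc U d gE with hEdef
  set τ : ℝ := ∑ i, d i with hτdef
  have hτ0 : 0 ≤ τ := Finset.sum_nonneg fun i _ => hd i
  have hTtr : T.trace = (τ : ℂ) := by
    rw [hTfc, CondMinAux.fc_trace hU]
    simp only [id_eq]; rfl
  have hTre : T.trace.re = τ := by rw [hTtr]; simp
  -- algebraic identities
  have hWW : W * W = T := by
    rw [hWdef, CondMinAux.fc_mul hU, hTfc]
    exact CondMinAux.fc_congr fun i => Real.mul_self_sqrt (hd i)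
  have hRW : R * W = E := by
    rw [hRdef, hWdef, CondMinAux.fc_mul hU, hEdef]
    refine CondMinAux.fc_congr fun i => ?_
    by_cases h : d i = 0
    · simp [hgR, hgW, hgE, h]
    · have hpos : 0 < d i := lt_of_le_of_ne (hd i) (Ne.symm h)
      have hs : Real.sqrt (d i) ≠ 0 := (Real.sqrt_pos.mpr hpos).ne'
      simp [hgR, hgW, hgE, h, inv_mul_cancel₀ hs]
  have hRR : R * R = P := by
    rw [hRdef, CondMinAux.fc_mul hU, hPdef]
    refine CondMinAux.fc_congr fun i => ?_
    by_cases h : d i = 0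
    · simp [hgR, hgP, h]
    · simp [hgR, hgP, h, ← mul_inv, Real.mul_self_sqrt (hd i)]
  have hPTT : P * (T * T) = T := by
    rw [hPdef, hTfc, CondMinAux.fc_mul hU, CondMinAux.fc_mul hU]
    refine CondMinAux.fc_congr fun i => ?_
    by_cases h : d i = 0
    · simp [hgP, h]
    · simp [hgP, h]
  have hPTTP : P * (T * T) * P = E := by
    rw [hPTT, hPdef, hTfc, CondMinAux.fc_mul hU, hEdef]
    refine CondMinAux.fc_congr fun i => ?_
    by_cases h : d i = 0
    · simp [hgP, hgE, h]
    · simp [hgP, hgE, h]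
  have hPconjT : Pᴴ = P := by rw [hPdef]; exact CondMinAux.fc_conjT _
  have hWconjT : Wᴴ = W := by rw [hWdef]; exact CondMinAux.fc_conjT _
  have hRconjT : Rᴴ = R := by rw [hRdef]; exact CondMinAux.fc_conjT _
  have hEconjT : Eᴴ = E := by rw [hEdef]; exact CondMinAux.fc_conjT _
  have hPpsd : P.PosSemidef := by
    rw [hPdef]
    refine CondMinAux.fc_psd _ fun i => ?_
    by_cases h : d i = 0
    · simp [hgP, h]
    · simp only [hgP, h, if_false]
      exact inv_nonneg.mpr (hd i)
  have hOneSubE : ((1 : Matrix a a ℂ) - E).PosSemidef := by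
    rw [← CondMinAux.fc_one (d := d) hU', hEdef, CondMinAux.fc_sub]
    refine CondMinAux.fc_psd _ fun i => ?_
    by_cases h : d i = 0 <;> simp [hgE, h]
  -- E * X = X
  have hEX : E * X = X := by
    have hETT : (E - 1) * (T * T) = 0 := by
      rw [Matrix.sub_mul, one_mul, sub_eq_zero, hEdef, hTfc, CondMinAux.fc_mul hU,
        CondMinAux.fc_mul hU]
      refine CondMinAux.fc_congr fun i => ?_
      by_cases h : d i = 0 <;> simp [hgE, h]
    have h1 : ((E - 1) * X) * ((E - 1) * X)ᴴ = 0 := by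
      rw [conjTranspose_mul, Matrix.mul_assoc, ← Matrix.mul_assoc X Xᴴ, hXX,
        ← Matrix.mul_assoc, hETT, Matrix.zero_mul]
    have hzero : ((E - 1) * X)ᴴ * ((E - 1) * X) = 0 := by
      have h2 := Matrix.conjTranspose_mul_self_eq_zero (A := ((E - 1) * X)ᴴ)
      rw [conjTranspose_conjTranspose] at h2
      rw [h2.mp h1]
      simp
    have h0 : (E - 1) * X = 0 := Matrix.conjTranspose_mul_self_eq_zero.mp hzero
    rw [Matrix.sub_mul, Matrix.one_mul] at h0
    exact sub_eq_zero.mp h0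
  have hXE : Xᴴ * E = Xᴴ := by
    rw [← hEconjT, ← conjTranspose_mul, hEX]
  -- dot products as traces
  have key_dot : ∀ φ : a × b → ℂ,
      star ψ ⬝ᵥ φ = (Xᴴ * Matrix.of fun i j => φ (i, j)).trace := by
    intro φ
    rw [CondMinAux.trace_eq_dot, hflatX]
    congr 1
  -- feasibility characterization
  have feas_iff : ∀ υ : Matrix b b ℂ, υ.IsHermitian →
      (((((1 : Matrix a a ℂ) ⊗ₖ υ) - Matrix.vecMulVec ψ (star ψ)).PosSemidef) ↔
        ∀ φ : a × b → ℂ,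
          (star ψ ⬝ᵥ φ) * star (star ψ ⬝ᵥ φ) ≤
            ((Matrix.of fun i j => φ (i, j))ᴴ * (Matrix.of fun i j => φ (i, j)) * υᵀ).trace) := by
    intro υ hυH
    have hherm : ((((1 : Matrix a a ℂ) ⊗ₖ υ) - Matrix.vecMulVec ψ (star ψ))).IsHermitian := by
      show _ = _
      rw [conjTranspose_sub, CondMinAux.kron_one_conjTranspose, hυH.eq]
      congr 1
      ext p q
      simp [Matrix.vecMulVec_apply, Matrix.conjTranspose_apply, mul_comm]
    constructor
    · intro hpsd φ
      have h := hpsd.dotProduct_mulVec_nonneg φ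
      rw [sub_mulVec, dotProduct_sub, CondMinAux.dot_kron, CondMinAux.dot_vecMulVec] at h
      exact sub_nonneg.mp h
    · intro hb
      refine Matrix.PosSemidef.of_dotProduct_mulVec_nonneg hherm fun φ => ?_
      rw [sub_mulVec, dotProduct_sub, CondMinAux.dot_kron, CondMinAux.dot_vecMulVec]
      exact sub_nonneg.mpr (hb φ)
  -- trace identities
  have e_tr1 : ∀ Φ : Matrix a b ℂ,
      (Φᴴ * Φ * (Xᴴ * P * X)).trace = ((Φ * Xᴴ * R)ᴴ * (Φ * Xᴴ * R)).trace := by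
    intro Φ
    simp only [conjTranspose_mul, conjTranspose_conjTranspose, hRconjT, Matrix.mul_assoc]
    conv_lhs => rw [Matrix.trace_mul_comm]
    simp only [Matrix.mul_assoc]
    conv_lhs => rw [Matrix.trace_mul_comm]
    simp only [Matrix.mul_assoc]
    conv_lhs => rw [Matrix.trace_mul_comm]
    simp only [Matrix.mul_assoc]
    conv_lhs => rw [Matrix.trace_mul_comm]
    simp only [Matrix.mul_assoc]
    conv_rhs => rw [Matrix.trace_mul_comm]
    simp only [Matrix.mul_assoc]
    rw [hRR]
  have e_tr2 : ∀ Φ : Matrix a b ℂ,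
      (Xᴴ * Φ).trace = (Wᴴ * (Φ * Xᴴ * R)).trace := by
    intro Φ
    rw [hWconjT]
    conv_rhs => rw [Matrix.trace_mul_comm]
    simp only [Matrix.mul_assoc]
    rw [hRW, hXE]
    conv_rhs => rw [Matrix.trace_mul_comm]
  -- the witness
  set υ₀ : Matrix b b ℂ := T.trace • (Xᴴ * P * X)ᵀ with hυ₀def
  have hXPX_psd : (Xᴴ * P * X).PosSemidef := by
    have h := hPpsd.mul_mul_conjTranspose_same Xᴴ
    rwa [conjTranspose_conjTranspose] at h
  have hTtr_nonneg : (0 : ℂ) ≤ T.trace := by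
    rw [hTtr, Complex.le_def]
    constructor
    · simpa using hτ0
    · simp
  have hυ₀psd : υ₀.PosSemidef := CondMinAux.psd_smul hXPX_psd.transpose hTtr_nonneg
  have hυ₀T : υ₀ᵀ = T.trace • (Xᴴ * P * X) := by
    rw [hυ₀def, Matrix.transpose_smul, Matrix.transpose_transpose]
  -- trace of the witness
  have hXPXtr : (Xᴴ * P * X).trace = (τ : ℂ) := by
    rw [Matrix.mul_assoc, Matrix.trace_mul_comm, Matrix.mul_assoc, hXX, hPTT, hTtr]
  have hυ₀tr : υ₀.trace = (τ : ℂ) * (τ : ℂ) := by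
    rw [hυ₀def, Matrix.trace_smul, Matrix.trace_transpose, hXPXtr, hTtr, smul_eq_mul]
  -- feasibility of the witness
  have hfeas₀ : ∀ φ : a × b → ℂ,
      (star ψ ⬝ᵥ φ) * star (star ψ ⬝ᵥ φ) ≤
        ((Matrix.of fun i j => φ (i, j))ᴴ * (Matrix.of fun i j => φ (i, j)) * υ₀ᵀ).trace := by
    intro φ
    set Φ : Matrix a b ℂ := Matrix.of fun i j => φ (i, j) with hΦdef
    set C : Matrix a a ℂ := Φ * Xᴴ * R with hCdef
    set s : ℂ := star ψ ⬝ᵥ φ with hsdef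
    have hs : s = (Wᴴ * C).trace := by rw [hsdef, key_dot φ, ← hΦdef, e_tr2]
    have hcs := CondMinAux.cs_dot (CondMinAux.flat W) (CondMinAux.flat C)
    rw [← CondMinAux.trace_eq_dot, ← CondMinAux.trace_eq_dot, ← CondMinAux.trace_eq_dot] at hcs
    have hWWtr : (Wᴴ * W).trace = (τ : ℂ) := by rw [hWconjT, hWW, hTtr]
    have hCpsd := Matrix.posSemidef_conjTranspose_mul_self C
    obtain ⟨hCre, hCim⟩ := Complex.le_def.mp (CondMinAux.trace_nonneg' hCpsd)
    rw [hυ₀T, Matrix.mul_smul, Matrix.trace_smul, hTtr, smul_eq_mul, e_tr1 Φ, ← hCdef]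
    have hss : s * star s = (Complex.normSq s : ℂ) := by
      rw [Complex.star_def, Complex.mul_conj]
    rw [hss, Complex.le_def]
    constructor
    · have h1 : Complex.normSq s ≤ τ * ((Cᴴ * C).trace).re := by
        calc Complex.normSq s = Complex.normSq ((Wᴴ * C).trace) := by rw [hs]
          _ ≤ ((Wᴴ * W).trace).re * ((Cᴴ * C).trace).re := hcs
          _ = τ * ((Cᴴ * C).trace).re := by rw [hWWtr]; simp
      simpa [Complex.mul_re] using h1
    · simp [Complex.mul_im, ← hCim]
  -- lower bound
  have hlb : ∀ υ : Matrix b b ℂ, υ.PosSemidef →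
      ((((1 : Matrix a a ℂ) ⊗ₖ υ) - Matrix.vecMulVec ψ (star ψ)).PosSemidef) →
      τ ^ 2 ≤ υ.trace.re := by
    intro υ hυ hf
    have hb := (feas_iff υ hυ.1).mp hf (CondMinAux.flat (P * X))
    have hΦPX : (Matrix.of fun i j => (CondMinAux.flat (P * X)) (i, j)) = P * X := by
      ext i j; simp [CondMinAux.flat]
    rw [hΦPX] at hb
    have hsval : star ψ ⬝ᵥ CondMinAux.flat (P * X) = (τ : ℂ) := by
      rw [key_dot, hΦPX, Matrix.trace_mul_comm, Matrix.mul_assoc, hXX, hPTT, hTtr]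
    rw [hsval] at hb
    have hstar : star ((τ : ℂ)) = (τ : ℂ) := by
      rw [Complex.star_def, Complex.conj_ofReal]
    rw [hstar] at hb
    -- contraction bound
    have hEppT : (P * X) * (P * X)ᴴ = E := by
      rw [conjTranspose_mul, hPconjT, Matrix.mul_assoc P X (Xᴴ * P),
        ← Matrix.mul_assoc X Xᴴ P, hXX, ← Matrix.mul_assoc]
      exact hPTTP
    have hcontr : ((1 : Matrix b b ℂ) - (P * X)ᴴ * (P * X)).PosSemidef := by
      apply CondMinAux.contraction
      rw [hEppT]
      exact hOneSubE
    have h3 : 0 ≤ (((1 : Matrix b b ℂ) - (P * X)ᴴ * (P * X)) * υᵀ).trace :=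
      CondMinAux.trace_mul_nonneg hcontr hυ.transpose
    rw [Matrix.sub_mul, one_mul, Matrix.trace_sub] at h3
    have h4 : ((P * X)ᴴ * (P * X) * υᵀ).trace ≤ υᵀ.trace := sub_nonneg.mp h3
    have h5 : ((τ : ℂ) * (τ : ℂ)) ≤ υᵀ.trace := le_trans hb h4
    have h6 := (Complex.le_def.mp h5).1
    rw [Matrix.trace_transpose] at h6
    calc τ ^ 2 = ((τ : ℂ) * (τ : ℂ)).re := by
          rw [← Complex.ofReal_mul]; simp [sq]
      _ ≤ υ.trace.re := h6
  -- compute the infimum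
  have hIsLeast : IsLeast {t : ℝ | ∃ υ : Matrix b b ℂ, υ.PosSemidef ∧
      (((1 : Matrix a a ℂ) ⊗ₖ υ) - Matrix.vecMulVec ψ (star ψ)).PosSemidef ∧
      t = υ.trace.re} (τ ^ 2) := by
    constructor
    · refine ⟨υ₀, hυ₀psd, (feas_iff υ₀ hυ₀psd.1).mpr (hfeas₀), ?_⟩
      rw [hυ₀tr, ← Complex.ofReal_mul]
      simp [sq]
    · rintro t ⟨υ, h1, h2, rfl⟩
      exact hlb υ h1 h2
  have hInf : sInf {t : ℝ | ∃ υ : Matrix b b ℂ, υ.PosSemidef ∧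
      (((1 : Matrix a a ℂ) ⊗ₖ υ) - Matrix.vecMulVec ψ (star ψ)).PosSemidef ∧
      t = υ.trace.re} = τ ^ 2 := hIsLeast.csInf_eq
  rw [condMinEntropy, hInf, hTre, Real.logb_pow]
  norm_num
end
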